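/- arXiv:0804.3214 — 5 statements merged into one kernel-verified Lean document; each statement's English description precedes it below -/
import Mathlib

section
/- The maps T_d defined on the formal power series ring B = ℚ[[x_i : i ∈ I]] by T_d(x_j) = x_j · (1 + x^d)^{{d,j}} (continuously extended as algebra endomorphisms) are Poisson algebra automorphisms of B with respect to the Poisson bracket {x_i, x_j} = b_{ij} x_i x_j. -/
/- STATEMENT 4: The maps T_d defined on B = ℚ[[x_i : i ∈ I]] by
T_d(x_j) = x_j · (1 + x^d)^{{d,j}} (continuously extended as algebra endomorphisms) are
Poisson algebra automorphisms of B for the Poisson bracket {x_i, x_j} = b_{ij} x_i x_j,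
where b_{ij} = {i,j} is the skew-symmetrized Euler form of a quiver without oriented
cycles. -/

open scoped Classical
set_option linter.unusedSectionVars false
set_option linter.unreachableTactic false
set_option linter.unusedTactic false
set_option linter.unusedVariables false

/-- The Euler form of a quiver with vertex set `I` and `a i j` arrows from `i` to `j`:
`⟨d,e⟩ = Σ_i d_i e_i - Σ_{α : i → j} d_i e_j`. -/
def eulerForm {I : Type*} [Fintype I] (a : I → I → ℕ) (d e : I →₀ ℕ) : ℤ :=
  ∑ i, (d i : ℤ) * (e i : ℤ) - ∑ i, ∑ j, (a i j : ℤ) * (d i : ℤ) * (e j : ℤ)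

/-- The skew-symmetrization `{d,e} = ⟨d,e⟩ - ⟨e,d⟩`. -/
def skewForm {I : Type*} [Fintype I] (a : I → I → ℕ) (d e : I →₀ ℕ) : ℤ :=
  eulerForm a d e - eulerForm a e d

/-- The Poisson bracket on `B = ℚ[[x_i : i ∈ I]]` determined (as a continuous
biderivation) by `{x_i, x_j} = b_{ij} x_i x_j`; on monomials, `{x^d, x^e} = {d,e} x^{d+e}`. -/
noncomputable def pbracket {I : Type*} [Fintype I] [DecidableEq I] (a : I → I → ℕ)
    (f g : MvPowerSeries I ℚ) : MvPowerSeries I ℚ :=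
  fun c => ∑ p ∈ Finset.HasAntidiagonal.antidiagonal c,
    ((skewForm a p.1 p.2 : ℤ) : ℚ) * (MvPowerSeries.coeff p.1 f) * (MvPowerSeries.coeff p.2 g)

section Aux
variable {I : Type*} [Fintype I] [DecidableEq I] (a : I → I → ℕ)

open MvPowerSeries Finset

lemma eulerForm_add_right (d e f : I →₀ ℕ) :
    eulerForm a d (e + f) = eulerForm a d e + eulerForm a d f := by
  simp only [eulerForm, Finsupp.add_apply, Nat.cast_add, mul_add, Finset.sum_add_distrib]
  ring

lemma eulerForm_add_left (d e f : I →₀ ℕ) :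
    eulerForm a (d + e) f = eulerForm a d f + eulerForm a e f := by
  simp only [eulerForm, Finsupp.add_apply, Nat.cast_add, add_mul, mul_add, Finset.sum_add_distrib]
  ring

lemma eulerForm_zero_right (d : I →₀ ℕ) : eulerForm a d 0 = 0 := by
  simp [eulerForm]

lemma eulerForm_zero_left (d : I →₀ ℕ) : eulerForm a 0 d = 0 := by
  simp [eulerForm]

lemma skewForm_add_right (d e f : I →₀ ℕ) :
    skewForm a d (e + f) = skewForm a d e + skewForm a d f := by
  simp only [skewForm, eulerForm_add_right, eulerForm_add_left]; ring

lemma skewForm_add_left (d e f : I →₀ ℕ) :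
    skewForm a (d + e) f = skewForm a d f + skewForm a e f := by
  simp only [skewForm, eulerForm_add_right, eulerForm_add_left]; ring

lemma skewForm_zero_right (d : I →₀ ℕ) : skewForm a d 0 = 0 := by
  simp [skewForm, eulerForm_zero_right, eulerForm_zero_left]

lemma skewForm_zero_left (d : I →₀ ℕ) : skewForm a 0 d = 0 := by
  simp [skewForm, eulerForm_zero_right, eulerForm_zero_left]

lemma skewForm_antisymm (d e : I →₀ ℕ) : skewForm a d e = - skewForm a e d := by
  simp [skewForm]

lemma skewForm_self (d : I →₀ ℕ) : skewForm a d d = 0 := by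
  simp [skewForm]

end Aux

section Main
variable {I : Type*} [Fintype I] [DecidableEq I] (a : I → I → ℕ)

open MvPowerSeries Finset

local notation "B" => MvPowerSeries I ℚ

/-- the series `x^e * u^(σ e)` -/
noncomputable def mE (u : Bˣ) (σ : (I →₀ ℕ) → ℤ) (e : I →₀ ℕ) : B :=
  monomial e 1 * ((u ^ σ e : Bˣ) : B)

lemma coeff_mE_of_not_le {u : Bˣ} {σ : (I →₀ ℕ) → ℤ} {e c : I →₀ ℕ} (h : ¬ e ≤ c) :
    coeff c (mE u σ e) = 0 := by
  rw [mE, coeff_monomial_mul, if_neg h]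

lemma mE_zero (u : Bˣ) (σ : (I →₀ ℕ) → ℤ) (hσ : σ 0 = 0) : mE u σ 0 = 1 := by
  simp [mE, hσ]

lemma mE_add (u : Bˣ) (σ : (I →₀ ℕ) → ℤ) (hσ : ∀ p q, σ (p + q) = σ p + σ q) (p q : I →₀ ℕ) :
    mE u σ (p + q) = mE u σ p * mE u σ q := by
  rw [mE, mE, mE, hσ, zpow_add, Units.val_mul, mul_mul_mul_comm, monomial_mul_monomial, one_mul]

/-- the underlying function of `T` -/
noncomputable def Tfun (u : Bˣ) (σ : (I →₀ ℕ) → ℤ) (f : B) : B :=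
  fun c => ∑ e ∈ Finset.Iic c, coeff e f * coeff c (mE u σ e)

lemma coeff_Tfun (u : Bˣ) (σ : (I →₀ ℕ) → ℤ) (f : B) (c : I →₀ ℕ) :
    coeff c (Tfun u σ f) = ∑ e ∈ Finset.Iic c, coeff e f * coeff c (mE u σ e) := rfl

end Main

section Main2
set_option maxHeartbeats 1000000
variable {I : Type*} [Fintype I] [DecidableEq I] (a : I → I → ℕ)

open MvPowerSeries Finset

local notation "B" => MvPowerSeries I ℚ

/-- Reindexing: summing over `e ≤ c` and then over the antidiagonal of `e` amounts to
summing over pairs `(p,q)` with `p + q ≤ c`. -/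
lemma sum_Iic_antidiagonal (c : I →₀ ℕ) (F : (I →₀ ℕ) → (I →₀ ℕ) → ℚ)
    (hF : ∀ p q, ¬ p + q ≤ c → F p q = 0) :
    ∑ e ∈ Finset.Iic c, ∑ pq ∈ Finset.HasAntidiagonal.antidiagonal e, F pq.1 pq.2
      = ∑ p ∈ Finset.Iic c, ∑ q ∈ Finset.Iic c, F p q := by
  have hdisj : (↑(Finset.Iic c) : Set (I →₀ ℕ)).PairwiseDisjoint
      (fun e => (Finset.HasAntidiagonal.antidiagonal e : Finset ((I →₀ ℕ) × (I →₀ ℕ)))) := by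
    intro e _ e' _ hne
    simp only [Function.onFun, Finset.disjoint_left]
    intro pq h1 h2
    exact hne ((Finset.HasAntidiagonal.mem_antidiagonal.mp h1).symm.trans (Finset.HasAntidiagonal.mem_antidiagonal.mp h2))
  rw [← Finset.sum_biUnion hdisj, ← Finset.sum_product']
  apply Finset.sum_subset
  · intro pq hpq
    rcases Finset.mem_biUnion.mp hpq with ⟨e, he, hpe⟩
    have h1 := Finset.HasAntidiagonal.mem_antidiagonal.mp hpe
    have he' : pq.1 + pq.2 ≤ c := h1.trans_le (Finset.mem_Iic.mp he)
    exact Finset.mem_product.mpr ⟨Finset.mem_Iic.mpr (le_trans le_self_add he'),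
      Finset.mem_Iic.mpr (le_trans le_add_self he')⟩
  · intro pq _ hpq
    apply hF
    intro hle
    exact hpq (Finset.mem_biUnion.mpr ⟨pq.1 + pq.2, Finset.mem_Iic.mpr hle,
      Finset.HasAntidiagonal.mem_antidiagonal.mpr rfl⟩)

/-- canonical triple antidiagonal sum, variant A -/
lemma triple_sumA (c : I →₀ ℕ) (G : (I →₀ ℕ) → (I →₀ ℕ) → (I →₀ ℕ) → ℚ) :
    ∑ qs ∈ Finset.HasAntidiagonal.antidiagonal c, ∑ pr ∈ Finset.HasAntidiagonal.antidiagonal qs.2, G pr.1 qs.1 pr.2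
      = ∑ ps ∈ Finset.HasAntidiagonal.antidiagonal c, ∑ qr ∈ Finset.HasAntidiagonal.antidiagonal ps.2, G ps.1 qr.1 qr.2 := by
  rw [Finset.sum_sigma', Finset.sum_sigma']
  apply Finset.sum_nbij' (fun x => ⟨(x.2.1, x.1.1 + x.2.2), (x.1.1, x.2.2)⟩)
    (fun x => ⟨(x.2.1, x.1.1 + x.2.2), (x.1.1, x.2.2)⟩) <;>
    rintro ⟨⟨p, s⟩, ⟨q, r⟩⟩ h <;>
    obtain ⟨h1, h2⟩ := Finset.mem_sigma.mp h <;>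
    rw [Finset.HasAntidiagonal.mem_antidiagonal] at h1 h2 <;> dsimp only at h1 h2 ⊢ <;> subst h2 <;> subst h1 <;>
    simp [Finset.mem_sigma, Finset.HasAntidiagonal.mem_antidiagonal, add_comm, add_left_comm, add_assoc]

/-- canonical triple antidiagonal sum, variant B -/
lemma triple_sumB (c : I →₀ ℕ) (G : (I →₀ ℕ) → (I →₀ ℕ) → (I →₀ ℕ) → ℚ) :
    ∑ rs ∈ Finset.HasAntidiagonal.antidiagonal c, ∑ pq ∈ Finset.HasAntidiagonal.antidiagonal rs.2, G pq.1 pq.2 rs.1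
      = ∑ ps ∈ Finset.HasAntidiagonal.antidiagonal c, ∑ qr ∈ Finset.HasAntidiagonal.antidiagonal ps.2, G ps.1 qr.1 qr.2 := by
  rw [Finset.sum_sigma', Finset.sum_sigma']
  apply Finset.sum_nbij' (fun x => ⟨(x.2.1, x.2.2 + x.1.1), (x.2.2, x.1.1)⟩)
    (fun x => ⟨(x.2.2, x.1.1 + x.2.1), (x.1.1, x.2.1)⟩) <;>
    rintro ⟨⟨p, s⟩, ⟨q, r⟩⟩ h <;>
    obtain ⟨h1, h2⟩ := Finset.mem_sigma.mp h <;>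
    rw [Finset.HasAntidiagonal.mem_antidiagonal] at h1 h2 <;> dsimp only at h1 h2 ⊢ <;> subst h2 <;> subst h1 <;>
    simp [Finset.mem_sigma, Finset.HasAntidiagonal.mem_antidiagonal, add_comm, add_left_comm, add_assoc]

end Main2
section Main3
set_option maxHeartbeats 1000000
variable {I : Type*} [Fintype I] [DecidableEq I]

open MvPowerSeries Finset

variable (u : (MvPowerSeries I ℚ)ˣ) (σ : (I →₀ ℕ) → ℤ)

lemma Tfun_monomial (e : I →₀ ℕ) (r : ℚ) :
    Tfun u σ (monomial e r) = monomial e r * ((u ^ σ e : (MvPowerSeries I ℚ)ˣ) : MvPowerSeries I ℚ) := by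
  ext c
  have key : ∀ e' ∈ Finset.Iic c, coeff e' (monomial e r) * coeff c (mE u σ e')
      = if e' = e then r * coeff c (mE u σ e) else 0 := by
    intro e' _
    rw [coeff_monomial]
    split_ifs with h
    · subst h; rfl
    · exact zero_mul _
  rw [coeff_Tfun, Finset.sum_congr rfl key,
    Finset.sum_ite_eq' (Finset.Iic c) e (fun _ => r * coeff c (mE u σ e))]
  by_cases hle : e ≤ c
  · rw [if_pos (Finset.mem_Iic.mpr hle), mE, coeff_monomial_mul, coeff_monomial_mul,
      if_pos hle, if_pos hle, one_mul]
  · rw [if_neg (fun h => hle (Finset.mem_Iic.mp h)), coeff_monomial_mul, if_neg hle]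

lemma Tfun_add (f g : MvPowerSeries I ℚ) : Tfun u σ (f + g) = Tfun u σ f + Tfun u σ g := by
  ext c
  simp only [coeff_Tfun, map_add, add_mul, Finset.sum_add_distrib]

lemma coeff_Tfun_of_le {f : MvPowerSeries I ℚ} {s c : I →₀ ℕ} (hs : s ≤ c) :
    coeff s (Tfun u σ f) = ∑ p ∈ Finset.Iic c, coeff p f * coeff s (mE u σ p) := by
  rw [coeff_Tfun]
  apply Finset.sum_subset (Finset.Iic_subset_Iic.mpr hs)
  intro p _ hp
  rw [coeff_mE_of_not_le (fun h => hp (Finset.mem_Iic.mpr h)), mul_zero]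

lemma Tfun_mul (hσ : ∀ p q, σ (p + q) = σ p + σ q) (f g : MvPowerSeries I ℚ) :
    Tfun u σ (f * g) = Tfun u σ f * Tfun u σ g := by
  ext c
  -- right-hand side
  have hRHS : coeff c (Tfun u σ f * Tfun u σ g)
      = ∑ st ∈ Finset.HasAntidiagonal.antidiagonal c, ∑ p ∈ Finset.Iic c, ∑ q ∈ Finset.Iic c,
          (coeff p f * coeff st.1 (mE u σ p)) * (coeff q g * coeff st.2 (mE u σ q)) := by
    rw [coeff_mul]
    apply Finset.sum_congr rfl
    intro st hst
    have h1 : st.1 ≤ c := (Finset.HasAntidiagonal.mem_antidiagonal.mp hst) ▸ le_self_add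
    have h2 : st.2 ≤ c := (Finset.HasAntidiagonal.mem_antidiagonal.mp hst) ▸ le_add_self
    rw [coeff_Tfun_of_le u σ h1, coeff_Tfun_of_le u σ h2, Finset.sum_mul_sum]
  -- left-hand side
  have hLHS : coeff c (Tfun u σ (f * g))
      = ∑ p ∈ Finset.Iic c, ∑ q ∈ Finset.Iic c,
          coeff p f * coeff q g * coeff c (mE u σ (p + q)) := by
    rw [coeff_Tfun, ← sum_Iic_antidiagonal c
      (fun p q => coeff p f * coeff q g * coeff c (mE u σ (p + q)))
      (fun p q h => by rw [coeff_mE_of_not_le h, mul_zero])]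
    apply Finset.sum_congr rfl
    intro e _
    rw [coeff_mul, Finset.sum_mul]
    apply Finset.sum_congr rfl
    intro pq hpq
    rw [Finset.HasAntidiagonal.mem_antidiagonal.mp hpq]
  have hinner : ∀ p q : I →₀ ℕ, coeff p f * coeff q g * coeff c (mE u σ (p + q))
      = ∑ st ∈ Finset.HasAntidiagonal.antidiagonal c,
          (coeff p f * coeff st.1 (mE u σ p)) * (coeff q g * coeff st.2 (mE u σ q)) := by
    intro p q
    rw [mE_add u σ hσ, coeff_mul, Finset.mul_sum]
    exact Finset.sum_congr rfl fun st _ => by ring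
  rw [hLHS, hRHS]
  exact (Finset.sum_congr rfl fun p _ =>
    ((Finset.sum_congr rfl fun q _ => hinner p q).trans Finset.sum_comm)).trans Finset.sum_comm

lemma sigma_zero (hσ : ∀ p q : I →₀ ℕ, σ (p + q) = σ p + σ q) : σ 0 = 0 := by
  have := hσ 0 0
  simp only [add_zero] at this
  omega

/-- `T` as an algebra homomorphism. -/
noncomputable def Thom (hσ : ∀ p q : I →₀ ℕ, σ (p + q) = σ p + σ q) : MvPowerSeries I ℚ →ₐ[ℚ] MvPowerSeries I ℚ where
  toFun := Tfun u σ
  map_one' := by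
    rw [← monomial_zero_one, Tfun_monomial, sigma_zero σ hσ, zpow_zero, Units.val_one, mul_one,
      monomial_zero_one]
  map_mul' := Tfun_mul u σ hσ
  map_zero' := by
    ext c; rw [coeff_Tfun]; simp
  map_add' := Tfun_add u σ
  commutes' := by
    intro r
    show Tfun u σ (algebraMap ℚ (MvPowerSeries I ℚ) r) = algebraMap ℚ (MvPowerSeries I ℚ) r
    rw [MvPowerSeries.algebraMap_apply, ← monomial_zero_eq_C_apply, Tfun_monomial,
      sigma_zero σ hσ, zpow_zero, Units.val_one, mul_one, monomial_zero_eq_C_apply]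

lemma coeff_Thom (hσ : ∀ p q : I →₀ ℕ, σ (p + q) = σ p + σ q) (f : MvPowerSeries I ℚ) (c : I →₀ ℕ) :
    coeff c (Thom u σ hσ f) = ∑ e ∈ Finset.Iic c, coeff e f * coeff c (mE u σ e) := rfl

lemma Thom_monomial_one (hσ : ∀ p q : I →₀ ℕ, σ (p + q) = σ p + σ q) (e : I →₀ ℕ) :
    Thom u σ hσ (monomial e 1) = monomial e 1 * ((u ^ σ e : (MvPowerSeries I ℚ)ˣ) : MvPowerSeries I ℚ) :=
  Tfun_monomial u σ e 1

end Main3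
section Main4
set_option maxHeartbeats 1000000
variable {I : Type*} [Fintype I] [DecidableEq I]

open MvPowerSeries Finset

variable (u : (MvPowerSeries I ℚ)ˣ) (σ τ : (I →₀ ℕ) → ℤ) (d : I →₀ ℕ)

lemma Thom_unit (hσ : ∀ p q : I →₀ ℕ, σ (p + q) = σ p + σ q)
    (hu : (u : MvPowerSeries I ℚ) = 1 + monomial d 1) (hσd : σ d = 0) :
    Thom u σ hσ (u : MvPowerSeries I ℚ) = (u : MvPowerSeries I ℚ) := by
  conv_lhs => rw [hu]
  rw [map_add, map_one, Thom_monomial_one u σ hσ d, hσd, zpow_zero, Units.val_one, mul_one, hu]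

lemma Thom_unit_zpow (hσ : ∀ p q : I →₀ ℕ, σ (p + q) = σ p + σ q)
    (hu : (u : MvPowerSeries I ℚ) = 1 + monomial d 1) (hσd : σ d = 0) (n : ℤ) :
    Thom u σ hσ ((u ^ n : (MvPowerSeries I ℚ)ˣ) : MvPowerSeries I ℚ)
      = ((u ^ n : (MvPowerSeries I ℚ)ˣ) : MvPowerSeries I ℚ) := by
  have h1 : Units.map (Thom u σ hσ).toRingHom.toMonoidHom u = u :=
    Units.ext (Thom_unit u σ d hσ hu hσd)
  calc Thom u σ hσ ((u ^ n : (MvPowerSeries I ℚ)ˣ) : MvPowerSeries I ℚ)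
      = ((Units.map (Thom u σ hσ).toRingHom.toMonoidHom (u ^ n) :
          (MvPowerSeries I ℚ)ˣ) : MvPowerSeries I ℚ) := rfl
    _ = ((u ^ n : (MvPowerSeries I ℚ)ˣ) : MvPowerSeries I ℚ) := by rw [map_zpow, h1]

lemma Thom_comp_apply (hσ : ∀ p q : I →₀ ℕ, σ (p + q) = σ p + σ q)
    (hτ : ∀ p q : I →₀ ℕ, τ (p + q) = τ p + τ q)
    (hu : (u : MvPowerSeries I ℚ) = 1 + monomial d 1) (hτd : τ d = 0)
    (hστ : ∀ e, τ e + σ e = 0) (f : MvPowerSeries I ℚ) :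
    Thom u τ hτ (Thom u σ hσ f) = f := by
  have h3 : ∀ p : I →₀ ℕ, Tfun u τ (mE u σ p) = monomial p 1 := by
    intro p
    show Thom u τ hτ (mE u σ p) = monomial p 1
    rw [mE, map_mul, Thom_monomial_one u τ hτ p, Thom_unit_zpow u τ d hτ hu hτd (σ p),
      mul_assoc, ← Units.val_mul, ← zpow_add, hστ p, zpow_zero, Units.val_one, mul_one]
  ext c
  rw [coeff_Thom u τ hτ]
  have h1 : ∀ e ∈ Finset.Iic c, coeff e (Thom u σ hσ f) * coeff c (mE u τ e)
      = ∑ p ∈ Finset.Iic c, (coeff p f * coeff e (mE u σ p)) * coeff c (mE u τ e) := by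
    intro e he
    rw [show coeff e (Thom u σ hσ f) = coeff e (Tfun u σ f) from rfl,
      coeff_Tfun_of_le u σ (Finset.mem_Iic.mp he), Finset.sum_mul]
  rw [Finset.sum_congr rfl h1, Finset.sum_comm]
  have h2 : ∀ p : I →₀ ℕ, ∑ e ∈ Finset.Iic c,
      (coeff p f * coeff e (mE u σ p)) * coeff c (mE u τ e)
      = coeff p f * coeff c (Tfun u τ (mE u σ p)) := by
    intro p
    rw [coeff_Tfun, Finset.mul_sum]
    exact Finset.sum_congr rfl fun e _ => by ring
  rw [Finset.sum_congr rfl fun p _ => h2 p]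
  have h4 : ∀ p ∈ Finset.Iic c, coeff p f * coeff c (Tfun u τ (mE u σ p))
      = if p = c then coeff p f else 0 := by
    intro p _
    rw [h3 p, coeff_monomial]
    rcases eq_or_ne p c with h | h
    · subst h; simp
    · rw [if_neg (fun hh => h hh.symm), mul_zero, if_neg h]
  rw [Finset.sum_congr rfl h4, Finset.sum_ite_eq' (Finset.Iic c) c (fun p => coeff p f),
    if_pos (Finset.mem_Iic.mpr le_rfl)]

/-- `T` as an algebra equivalence. -/
noncomputable def Tequiv (hσ : ∀ p q : I →₀ ℕ, σ (p + q) = σ p + σ q)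
    (hτ : ∀ p q : I →₀ ℕ, τ (p + q) = τ p + τ q)
    (hu : (u : MvPowerSeries I ℚ) = 1 + monomial d 1)
    (hσd : σ d = 0) (hτd : τ d = 0) (hστ : ∀ e, τ e + σ e = 0) :
    MvPowerSeries I ℚ ≃ₐ[ℚ] MvPowerSeries I ℚ :=
  AlgEquiv.ofAlgHom (Thom u σ hσ) (Thom u τ hτ)
    (AlgHom.ext fun f => Thom_comp_apply u τ σ d hτ hσ hu hσd
      (fun e => by have := hστ e; omega) f)
    (AlgHom.ext fun f => Thom_comp_apply u σ τ d hσ hτ hu hτd hστ f)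

lemma Tequiv_apply (hσ : ∀ p q : I →₀ ℕ, σ (p + q) = σ p + σ q)
    (hτ : ∀ p q : I →₀ ℕ, τ (p + q) = τ p + τ q)
    (hu : (u : MvPowerSeries I ℚ) = 1 + monomial d 1)
    (hσd : σ d = 0) (hτd : τ d = 0) (hστ : ∀ e, τ e + σ e = 0) (f : MvPowerSeries I ℚ) :
    Tequiv u σ τ d hσ hτ hu hσd hτd hστ f = Tfun u σ f := rfl

end Main4
section Main5
set_option maxHeartbeats 1000000
variable {I : Type*} [Fintype I] [DecidableEq I] (a : I → I → ℕ)

open MvPowerSeries Finset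

lemma coeff_pbracket (f g : MvPowerSeries I ℚ) (c : I →₀ ℕ) :
    coeff c (pbracket a f g) = ∑ pq ∈ Finset.HasAntidiagonal.antidiagonal c,
      ((skewForm a pq.1 pq.2 : ℤ) : ℚ) * coeff pq.1 f * coeff pq.2 g := rfl

lemma pbracket_add_right (f g h : MvPowerSeries I ℚ) :
    pbracket a f (g + h) = pbracket a f g + pbracket a f h := by
  ext c
  simp only [coeff_pbracket, map_add, mul_add, Finset.sum_add_distrib]

lemma pbracket_one_right (f : MvPowerSeries I ℚ) : pbracket a f 1 = 0 := by
  ext c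
  rw [coeff_pbracket, map_zero, Finset.sum_eq_zero]
  rintro ⟨p, q⟩ _
  rcases eq_or_ne q 0 with h | h
  · subst h
    rw [skewForm_zero_right]
    simp
  · rw [coeff_one, if_neg h, mul_zero]

lemma pbracket_antisymm (f g : MvPowerSeries I ℚ) : pbracket a f g = - pbracket a g f := by
  ext c
  rw [coeff_pbracket, map_neg, coeff_pbracket,
    Finsupp.sum_antidiagonal_swap c (fun p q => ((skewForm a p q : ℤ) : ℚ) *
      coeff p g * coeff q f), ← Finset.sum_neg_distrib]
  apply Finset.sum_congr rfl
  rintro ⟨p, q⟩ _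
  rw [skewForm_antisymm]
  push_cast
  ring

lemma pbracket_mul_right (f g h : MvPowerSeries I ℚ) :
    pbracket a f (g * h) = g * pbracket a f h + h * pbracket a f g := by
  ext c
  have hL : coeff c (pbracket a f (g * h)) = ∑ ps ∈ Finset.HasAntidiagonal.antidiagonal c,
      ∑ qr ∈ Finset.HasAntidiagonal.antidiagonal ps.2,
        (((skewForm a ps.1 qr.1 + skewForm a ps.1 qr.2 : ℤ)) : ℚ) * coeff ps.1 f *
          (coeff qr.1 g * coeff qr.2 h) := by
    rw [coeff_pbracket]
    apply Finset.sum_congr rfl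
    intro ps _
    rw [coeff_mul, Finset.mul_sum]
    apply Finset.sum_congr rfl
    intro qr hqr
    rw [← Finset.HasAntidiagonal.mem_antidiagonal.mp hqr, skewForm_add_right]
  have hR1 : coeff c (g * pbracket a f h) = ∑ ps ∈ Finset.HasAntidiagonal.antidiagonal c,
      ∑ qr ∈ Finset.HasAntidiagonal.antidiagonal ps.2,
        ((skewForm a ps.1 qr.2 : ℤ) : ℚ) * coeff ps.1 f *
          (coeff qr.1 g * coeff qr.2 h) := by
    rw [coeff_mul, ← triple_sumA c (fun p q r => ((skewForm a p r : ℤ) : ℚ) * coeff p f *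
      (coeff q g * coeff r h))]
    apply Finset.sum_congr rfl
    intro qs _
    rw [coeff_pbracket, Finset.mul_sum]
    exact Finset.sum_congr rfl fun pr _ => by ring
  have hR2 : coeff c (h * pbracket a f g) = ∑ ps ∈ Finset.HasAntidiagonal.antidiagonal c,
      ∑ qr ∈ Finset.HasAntidiagonal.antidiagonal ps.2,
        ((skewForm a ps.1 qr.1 : ℤ) : ℚ) * coeff ps.1 f *
          (coeff qr.1 g * coeff qr.2 h) := by
    rw [coeff_mul, ← triple_sumB c (fun p q r => ((skewForm a p q : ℤ) : ℚ) * coeff p f *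
      (coeff q g * coeff r h))]
    apply Finset.sum_congr rfl
    intro rs _
    rw [coeff_pbracket, Finset.mul_sum]
    exact Finset.sum_congr rfl fun pq _ => by ring
  rw [map_add, hL, hR1, hR2, ← Finset.sum_add_distrib]
  apply Finset.sum_congr rfl
  intro ps _
  rw [← Finset.sum_add_distrib]
  apply Finset.sum_congr rfl
  intro qr _
  push_cast
  ring

lemma pbracket_mul_left (f g h : MvPowerSeries I ℚ) :
    pbracket a (f * g) h = f * pbracket a g h + g * pbracket a f h := by
  rw [pbracket_antisymm a (f * g) h, pbracket_mul_right, pbracket_antisymm a g h,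
    pbracket_antisymm a f h]
  ring

lemma pbracket_monomial (p q : I →₀ ℕ) (r s : ℚ) :
    pbracket a (monomial p r) (monomial q s)
      = monomial (p + q) (((skewForm a p q : ℤ) : ℚ) * r * s) := by
  ext c
  rw [coeff_pbracket, coeff_monomial]
  by_cases hc : c = p + q
  · subst hc
    rw [if_pos rfl, Finset.sum_eq_single_of_mem (p, q) (Finset.HasAntidiagonal.mem_antidiagonal.mpr rfl)]
    · rw [coeff_monomial, if_pos rfl, coeff_monomial, if_pos rfl]
    · rintro ⟨p', q'⟩ hmem hne
      by_cases h1 : p' = p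
      · subst h1
        have h2 : q' = q := add_left_cancel (Finset.HasAntidiagonal.mem_antidiagonal.mp hmem)
        exact absurd (by rw [h2]) hne
      · rw [coeff_monomial, if_neg h1]
        ring
  · rw [if_neg hc, Finset.sum_eq_zero]
    rintro ⟨p', q'⟩ hmem
    by_cases h1 : p' = p
    · subst h1
      by_cases h2 : q' = q
      · subst h2
        exact absurd (Finset.HasAntidiagonal.mem_antidiagonal.mp hmem).symm hc
      · simp [coeff_monomial, h2]
    · rw [coeff_monomial, if_neg h1]
      ring

end Main5
section Main6
set_option maxHeartbeats 1600000
variable {I : Type*} [Fintype I] [DecidableEq I] (a : I → I → ℕ)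

open MvPowerSeries Finset

variable (u : (MvPowerSeries I ℚ)ˣ) (d : I →₀ ℕ)

lemma monomial_eq_C_mul (e : I →₀ ℕ) (r : ℚ) :
    monomial e r = C r * monomial e 1 := by
  rw [← monomial_zero_eq_C_apply, monomial_mul_monomial, zero_add, mul_one]

lemma uval_mul (m n : ℤ) :
    ((u ^ m : (MvPowerSeries I ℚ)ˣ) : MvPowerSeries I ℚ)
      * ((u ^ n : (MvPowerSeries I ℚ)ˣ) : MvPowerSeries I ℚ)
      = ((u ^ (m + n) : (MvPowerSeries I ℚ)ˣ) : MvPowerSeries I ℚ) := by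
  rw [← Units.val_mul, ← zpow_add]

lemma pbracket_unit_zpow (f : MvPowerSeries I ℚ) (n : ℤ) :
    pbracket a f ((u ^ n : (MvPowerSeries I ℚ)ˣ) : MvPowerSeries I ℚ)
      = C ((n : ℤ) : ℚ) * ((u ^ (n - 1) : (MvPowerSeries I ℚ)ˣ) : MvPowerSeries I ℚ)
          * pbracket a f (u : MvPowerSeries I ℚ) := by
  induction n using Int.induction_on with
  | zero => simp [pbracket_one_right]
  | succ k ih =>
    have hsplit : ((u ^ ((k : ℤ) + 1) : (MvPowerSeries I ℚ)ˣ) : MvPowerSeries I ℚ)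
        = ((u ^ (k : ℤ) : (MvPowerSeries I ℚ)ˣ) : MvPowerSeries I ℚ) * (u : MvPowerSeries I ℚ) := by
      rw [zpow_add_one, Units.val_mul]
    have hk : (u : MvPowerSeries I ℚ) * ((u ^ ((k : ℤ) - 1) : (MvPowerSeries I ℚ)ˣ) :
        MvPowerSeries I ℚ) = ((u ^ (k : ℤ) : (MvPowerSeries I ℚ)ˣ) : MvPowerSeries I ℚ) := by
      have h : (1 : ℤ) + ((k : ℤ) - 1) = (k : ℤ) := by ring
      rw [← Units.val_mul, ← zpow_one_add, h]
    have hexp : ((k : ℤ) + 1) - 1 = (k : ℤ) := by ring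
    have hcast : (((k : ℤ) + 1 : ℤ) : ℚ) = (((k : ℤ) : ℤ) : ℚ) + 1 := by push_cast; ring
    rw [hsplit, pbracket_mul_right, ih, hexp, hcast, map_add, map_one]
    linear_combination (C (((k : ℤ) : ℤ) : ℚ) * pbracket a f (u : MvPowerSeries I ℚ)) * hk
  | pred k ih =>
    have hsplit : ((u ^ (-(k : ℤ)) : (MvPowerSeries I ℚ)ˣ) : MvPowerSeries I ℚ)
        = ((u ^ (-(k : ℤ) - 1) : (MvPowerSeries I ℚ)ˣ) : MvPowerSeries I ℚ)
          * (u : MvPowerSeries I ℚ) := by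
      have h : -(k : ℤ) = (-(k : ℤ) - 1) + 1 := by ring
      conv_lhs => rw [h]
      rw [zpow_add_one, Units.val_mul]
    have hk2 : (u : MvPowerSeries I ℚ) * ((u ^ (-(k : ℤ) - 2) : (MvPowerSeries I ℚ)ˣ) :
        MvPowerSeries I ℚ) = ((u ^ (-(k : ℤ) - 1) : (MvPowerSeries I ℚ)ˣ) :
        MvPowerSeries I ℚ) := by
      have h : (1 : ℤ) + (-(k : ℤ) - 2) = -(k : ℤ) - 1 := by ring
      rw [← Units.val_mul, ← zpow_one_add, h]
    have heq := ih
    rw [hsplit, pbracket_mul_right] at heq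
    have hexp : (-(k : ℤ) - 1) - 1 = -(k : ℤ) - 2 := by ring
    have hcast : ((-(k : ℤ) - 1 : ℤ) : ℚ) = ((-(k : ℤ) : ℤ) : ℚ) - 1 := by push_cast; ring
    rw [hexp, hcast, map_sub, map_one]
    refine (Units.mul_right_inj u).mp ?_
    linear_combination heq - (C ((-(k : ℤ) : ℤ) : ℚ) - 1)
      * pbracket a f (u : MvPowerSeries I ℚ) * hk2

variable (hu : (u : MvPowerSeries I ℚ) = 1 + monomial d 1)

include hu

lemma pbracket_u_right (f : MvPowerSeries I ℚ) :
    pbracket a f (u : MvPowerSeries I ℚ) = pbracket a f (monomial d 1) := by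
  rw [hu, pbracket_add_right, pbracket_one_right, zero_add]

lemma pbracket_X_u (e : I →₀ ℕ) :
    pbracket a (monomial e 1) (u : MvPowerSeries I ℚ)
      = C ((skewForm a e d : ℤ) : ℚ) * monomial (e + d) 1 := by
  rw [pbracket_u_right a u d hu, pbracket_monomial, mul_one, mul_one, monomial_eq_C_mul]

lemma pbracket_upow_u (m : ℤ) :
    pbracket a ((u ^ m : (MvPowerSeries I ℚ)ˣ) : MvPowerSeries I ℚ) (u : MvPowerSeries I ℚ)
      = 0 := by
  rw [pbracket_u_right a u d hu, pbracket_antisymm, pbracket_unit_zpow,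
    pbracket_X_u a u d hu d, skewForm_self]
  simp

lemma pbracket_upow_upow (m n : ℤ) :
    pbracket a ((u ^ m : (MvPowerSeries I ℚ)ˣ) : MvPowerSeries I ℚ)
      ((u ^ n : (MvPowerSeries I ℚ)ˣ) : MvPowerSeries I ℚ) = 0 := by
  rw [pbracket_unit_zpow, pbracket_upow_u a u d hu, mul_zero]

lemma pbracket_mE (p q : I →₀ ℕ) :
    pbracket a (mE u (fun e => skewForm a d e) p) (mE u (fun e => skewForm a d e) q)
      = monomial (p + q) ((skewForm a p q : ℤ) : ℚ)
          * ((u ^ (skewForm a d p + skewForm a d q) : (MvPowerSeries I ℚ)ˣ) :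
              MvPowerSeries I ℚ) := by
  simp only [mE]
  set Xp := monomial p (1 : ℚ)
  set Xq := monomial q (1 : ℚ)
  set Up := ((u ^ (skewForm a d p) : (MvPowerSeries I ℚ)ˣ) : MvPowerSeries I ℚ) with hUp
  set Uq := ((u ^ (skewForm a d q) : (MvPowerSeries I ℚ)ˣ) : MvPowerSeries I ℚ) with hUq
  have e1 : pbracket a (Xp * Up) (Xq * Uq)
      = Xp * pbracket a Up (Xq * Uq) + Up * pbracket a Xp (Xq * Uq) :=
    pbracket_mul_left a Xp Up (Xq * Uq)
  have e2 : pbracket a Up (Xq * Uq) = Xq * pbracket a Up Uq + Uq * pbracket a Up Xq :=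
    pbracket_mul_right a Up Xq Uq
  have e3 : pbracket a Xp (Xq * Uq) = Xq * pbracket a Xp Uq + Uq * pbracket a Xp Xq :=
    pbracket_mul_right a Xp Xq Uq
  have e4 : pbracket a Up Uq = 0 := pbracket_upow_upow a u d hu _ _
  have e5 : pbracket a Up Xq = - pbracket a Xq Up := pbracket_antisymm a Up Xq
  have e6 : pbracket a Xq Up = C ((skewForm a d p : ℤ) : ℚ)
      * ((u ^ (skewForm a d p - 1) : (MvPowerSeries I ℚ)ˣ) : MvPowerSeries I ℚ)
      * pbracket a Xq (u : MvPowerSeries I ℚ) := pbracket_unit_zpow a u Xq _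
  have e7 : pbracket a Xq (u : MvPowerSeries I ℚ)
      = C ((skewForm a q d : ℤ) : ℚ) * monomial (q + d) 1 := pbracket_X_u a u d hu q
  have e8 : pbracket a Xp Uq = C ((skewForm a d q : ℤ) : ℚ)
      * ((u ^ (skewForm a d q - 1) : (MvPowerSeries I ℚ)ˣ) : MvPowerSeries I ℚ)
      * pbracket a Xp (u : MvPowerSeries I ℚ) := pbracket_unit_zpow a u Xp _
  have e9 : pbracket a Xp (u : MvPowerSeries I ℚ)
      = C ((skewForm a p d : ℤ) : ℚ) * monomial (p + d) 1 := pbracket_X_u a u d hu p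
  have e10 : pbracket a Xp Xq = C ((skewForm a p q : ℤ) : ℚ) * monomial (p + q) 1 := by
    rw [pbracket_monomial, mul_one, mul_one, monomial_eq_C_mul]
  have hc1 : C (σ := I) ((skewForm a q d : ℤ) : ℚ) = - C ((skewForm a d q : ℤ) : ℚ) := by
    rw [skewForm_antisymm]
    push_cast
    rw [map_neg]
  have hc2 : C (σ := I) ((skewForm a p d : ℤ) : ℚ) = - C ((skewForm a d p : ℤ) : ℚ) := by
    rw [skewForm_antisymm]
    push_cast
    rw [map_neg]
  have h1 : Uq * ((u ^ (skewForm a d p - 1) : (MvPowerSeries I ℚ)ˣ) : MvPowerSeries I ℚ)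
      = ((u ^ (skewForm a d p + skewForm a d q - 1) : (MvPowerSeries I ℚ)ˣ) :
          MvPowerSeries I ℚ) := by
    rw [hUq, uval_mul]
    congr 1
    ring
  have h2 : Up * ((u ^ (skewForm a d q - 1) : (MvPowerSeries I ℚ)ˣ) : MvPowerSeries I ℚ)
      = ((u ^ (skewForm a d p + skewForm a d q - 1) : (MvPowerSeries I ℚ)ˣ) :
          MvPowerSeries I ℚ) := by
    rw [hUp, uval_mul]
    congr 1
    ring
  have h3 : Up * Uq = ((u ^ (skewForm a d p + skewForm a d q) : (MvPowerSeries I ℚ)ˣ) :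
      MvPowerSeries I ℚ) := by
    rw [hUp, hUq, uval_mul]
  have mm1 : Xp * monomial (q + d) 1 = monomial (p + (q + d)) 1 := by
    rw [monomial_mul_monomial, mul_one]
  have mm2 : Xq * monomial (p + d) 1 = monomial (q + (p + d)) 1 := by
    rw [monomial_mul_monomial, mul_one]
  have mm3 : monomial (p + (q + d)) (1 : ℚ) = monomial (q + (p + d)) (1 : ℚ) := by
    rw [show p + (q + d) = q + (p + d) from by rw [add_left_comm]]
  have hgoal : monomial (p + q) ((skewForm a p q : ℤ) : ℚ)
      = C ((skewForm a p q : ℤ) : ℚ) * monomial (p + q) 1 := monomial_eq_C_mul _ _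
  rw [e1, e2, e3, e4, e5, e6, e7, e8, e9, e10, hc1, hc2, hgoal]
  set W := ((u ^ (skewForm a d p + skewForm a d q - 1) : (MvPowerSeries I ℚ)ˣ) :
      MvPowerSeries I ℚ)
  set V := ((u ^ (skewForm a d p + skewForm a d q) : (MvPowerSeries I ℚ)ˣ) :
      MvPowerSeries I ℚ)
  set Cp := C (σ := I) ((skewForm a d p : ℤ) : ℚ)
  set Cq := C (σ := I) ((skewForm a d q : ℤ) : ℚ)
  set Cpq := C (σ := I) ((skewForm a p q : ℤ) : ℚ)
  set M1 := monomial (q + d) (1 : ℚ)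
  set M2 := monomial (p + d) (1 : ℚ)
  set M12 := monomial (p + q) (1 : ℚ)
  set N1 := monomial (p + (q + d)) (1 : ℚ)
  set N2 := monomial (q + (p + d)) (1 : ℚ)
  linear_combination (Cp * Cq * Xp * M1) * h1 + (Cp * Cq * W) * mm1 + (Cp * Cq * W) * mm3
    - (Cp * Cq * Xq * M2) * h2 - (Cp * Cq * W) * mm2 + (Cpq * M12) * h3

end Main6
section Main7
set_option maxHeartbeats 1600000
variable {I : Type*} [Fintype I] [DecidableEq I] (a : I → I → ℕ)

open MvPowerSeries Finset

variable (u : (MvPowerSeries I ℚ)ˣ) (d : I →₀ ℕ)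
variable (hu : (u : MvPowerSeries I ℚ) = 1 + monomial d 1)

include hu

lemma Tfun_pbracket (f g : MvPowerSeries I ℚ) :
    Tfun u (fun e => skewForm a d e) (pbracket a f g)
      = pbracket a (Tfun u (fun e => skewForm a d e) f)
          (Tfun u (fun e => skewForm a d e) g) := by
  set σ : (I →₀ ℕ) → ℤ := fun e => skewForm a d e with hσdef
  ext c
  have hL : coeff c (Tfun u σ (pbracket a f g))
      = ∑ p ∈ Finset.Iic c, ∑ q ∈ Finset.Iic c,
          ((skewForm a p q : ℤ) : ℚ) * coeff p f * coeff q g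
            * coeff c (mE u σ (p + q)) := by
    rw [coeff_Tfun, ← sum_Iic_antidiagonal c
      (fun p q => ((skewForm a p q : ℤ) : ℚ) * coeff p f * coeff q g
        * coeff c (mE u σ (p + q)))
      (fun p q h => by rw [coeff_mE_of_not_le h, mul_zero])]
    apply Finset.sum_congr rfl
    intro e _
    rw [coeff_pbracket, Finset.sum_mul]
    apply Finset.sum_congr rfl
    intro pq hpq
    rw [Finset.HasAntidiagonal.mem_antidiagonal.mp hpq]
  have hR : coeff c (pbracket a (Tfun u σ f) (Tfun u σ g))
      = ∑ st ∈ Finset.HasAntidiagonal.antidiagonal c, ∑ p ∈ Finset.Iic c, ∑ q ∈ Finset.Iic c,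
          ((skewForm a st.1 st.2 : ℤ) : ℚ) * (coeff p f * coeff st.1 (mE u σ p))
            * (coeff q g * coeff st.2 (mE u σ q)) := by
    rw [coeff_pbracket]
    apply Finset.sum_congr rfl
    intro st hst
    have h1 : st.1 ≤ c := (Finset.HasAntidiagonal.mem_antidiagonal.mp hst) ▸ le_self_add
    have h2 : st.2 ≤ c := (Finset.HasAntidiagonal.mem_antidiagonal.mp hst) ▸ le_add_self
    rw [coeff_Tfun_of_le u σ h1, coeff_Tfun_of_le u σ h2, mul_assoc, Finset.sum_mul_sum,
      Finset.mul_sum]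
    apply Finset.sum_congr rfl
    intro p _
    rw [Finset.mul_sum]
    exact Finset.sum_congr rfl fun q _ => by ring
  have key : ∀ p q : I →₀ ℕ,
      ((skewForm a p q : ℤ) : ℚ) * coeff p f * coeff q g * coeff c (mE u σ (p + q))
      = ∑ st ∈ Finset.HasAntidiagonal.antidiagonal c,
          ((skewForm a st.1 st.2 : ℤ) : ℚ) * (coeff p f * coeff st.1 (mE u σ p))
            * (coeff q g * coeff st.2 (mE u σ q)) := by
    intro p q
    have hpb := congrArg (coeff c) (pbracket_mE a u d hu p q)
    rw [coeff_pbracket] at hpb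
    have hmE : mE u σ (p + q)
        = monomial (p + q) 1 * ((u ^ (skewForm a d p + skewForm a d q) :
            (MvPowerSeries I ℚ)ˣ) : MvPowerSeries I ℚ) := by
      simp only [mE, hσdef]
      rw [skewForm_add_right]
    calc ((skewForm a p q : ℤ) : ℚ) * coeff p f * coeff q g * coeff c (mE u σ (p + q))
        = coeff p f * coeff q g *
            coeff c (monomial (p + q) ((skewForm a p q : ℤ) : ℚ)
              * ((u ^ (skewForm a d p + skewForm a d q) : (MvPowerSeries I ℚ)ˣ) :
                  MvPowerSeries I ℚ)) := by
          rw [monomial_eq_C_mul, mul_assoc ((C ((skewForm a p q : ℤ) : ℚ))),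
            coeff_C_mul, hmE]
          ring
      _ = coeff p f * coeff q g * ∑ st ∈ Finset.HasAntidiagonal.antidiagonal c,
            ((skewForm a st.1 st.2 : ℤ) : ℚ) * coeff st.1 (mE u σ p)
              * coeff st.2 (mE u σ q) := by rw [hpb]
      _ = _ := by
          rw [Finset.mul_sum]
          exact Finset.sum_congr rfl fun st _ => by ring
  rw [hL, hR]
  exact (Finset.sum_congr rfl fun p _ =>
    ((Finset.sum_congr rfl fun q _ => key p q).trans Finset.sum_comm)).trans Finset.sum_comm

end Main7

theorem Td_is_poisson_automorphism
    {I : Type*} [Fintype I] [DecidableEq I] (a : I → I → ℕ)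
    -- the quiver has no oriented cycles: vertices can be ordered (via an injection to ℕ)
    -- so that arrows strictly decrease the order
    (ord : I → ℕ) (hord : ∀ i j, a i j ≠ 0 → ord j < ord i)
    (d : I →₀ ℕ) (hd : d ≠ 0) :
    ∃ (u : (MvPowerSeries I ℚ)ˣ) (T : MvPowerSeries I ℚ ≃ₐ[ℚ] MvPowerSeries I ℚ),
      -- u = 1 + x^d (in particular 1 + x^d is invertible, so (1+x^d)^n makes sense, n ∈ ℤ)
      (u : MvPowerSeries I ℚ) = 1 + MvPowerSeries.monomial d 1 ∧
      -- T is the continuous extension, i.e. it is determined coefficientwise by its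
      -- (multiplicatively determined) values on monomials
      (∀ (f : MvPowerSeries I ℚ) (c : I →₀ ℕ),
        MvPowerSeries.coeff c (T f) = ∑ᶠ e : I →₀ ℕ,
          (MvPowerSeries.coeff e f) *
            MvPowerSeries.coeff c (T (MvPowerSeries.monomial e 1))) ∧
      -- T_d(x^e) = x^e · (1 + x^d)^{{d,e}}; for e = j a coordinate vector this is
      -- exactly T_d(x_j) = x_j (1+x^d)^{{d,j}}
      (∀ e : I →₀ ℕ, T (MvPowerSeries.monomial e 1) =
        MvPowerSeries.monomial e 1 * ((u ^ (skewForm a d e) : (MvPowerSeries I ℚ)ˣ) :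
          MvPowerSeries I ℚ)) ∧
      -- T is a Poisson automorphism
      (∀ f g, T (pbracket a f g) = pbracket a (T f) (T g)) := by
  
  classical
  open MvPowerSeries in
  -- the two exponent functions
  set σ : (I →₀ ℕ) → ℤ := fun e => skewForm a d e with hσdef
  set τ : (I →₀ ℕ) → ℤ := fun e => - skewForm a d e with hτdef
  have hσ : ∀ p q : I →₀ ℕ, σ (p + q) = σ p + σ q := by
    intro p q
    simp only [hσdef, skewForm_add_right]
  have hτ : ∀ p q : I →₀ ℕ, τ (p + q) = τ p + τ q := by
    intro p q
    simp only [hτdef, skewForm_add_right]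
    ring
  have hσd : σ d = 0 := skewForm_self a d
  have hτd : τ d = 0 := by simp only [hτdef, skewForm_self, neg_zero]
  have hστ : ∀ e, τ e + σ e = 0 := by
    intro e
    simp only [hσdef, hτdef, neg_add_cancel]
  -- the unit u = 1 + x^d
  have hcc : MvPowerSeries.constantCoeff (1 + monomial d (1 : ℚ)) ≠ 0 := by
    have h0 : MvPowerSeries.constantCoeff (monomial d (1 : ℚ)) = 0 := by
      rw [← coeff_zero_eq_constantCoeff_apply, coeff_monomial,
        if_neg (fun h => hd h.symm)]
    rw [map_add, map_one, h0, add_zero]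
    exact one_ne_zero
  set U : (MvPowerSeries I ℚ)ˣ :=
    { val := 1 + monomial d 1
      inv := (1 + monomial d 1)⁻¹
      val_inv := MvPowerSeries.mul_inv_cancel _ hcc
      inv_val := MvPowerSeries.inv_mul_cancel _ hcc } with hUdef
  have hu : (U : MvPowerSeries I ℚ) = 1 + monomial d 1 := rfl
  refine ⟨U, Tequiv U σ τ d hσ hτ hu hσd hτd hστ, rfl, ?_, ?_, ?_⟩
  · -- coefficientwise formula
    intro f c
    have hsupp : Function.support (fun e => coeff e f *
        coeff c (Tequiv U σ τ d hσ hτ hu hσd hτd hστ (monomial e 1)))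
        ⊆ ↑(Finset.Iic c) := by
      intro e he
      rw [Function.mem_support] at he
      rw [Finset.mem_coe, Finset.mem_Iic]
      by_contra hle
      apply he
      rw [Tequiv_apply, show Tfun U σ (monomial e 1) = mE U σ e from Tfun_monomial U σ e 1,
        coeff_mE_of_not_le hle, mul_zero]
    rw [finsum_eq_sum_of_support_subset _ hsupp, Tequiv_apply,
      show coeff c (Tfun U σ f) = _ from coeff_Tfun U σ f c]
    apply Finset.sum_congr rfl
    intro e _
    rw [Tequiv_apply, show Tfun U σ (monomial e 1) = mE U σ e from Tfun_monomial U σ e 1]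
  · -- values on monomials
    intro e
    rw [Tequiv_apply]
    exact Tfun_monomial U σ e 1
  · -- Poisson automorphism
    intro f g
    rw [Tequiv_apply, Tequiv_apply, Tequiv_apply]
    exact Tfun_pbracket a U d hu f g
end

section
/- In one variable with commutation relation t·t = q⁻¹ t², i.e. with t^m t^n = q^{-mn} t^{m+n}: the series E(t) = Σ_{n≥0} q^{-n²}/((1-q⁻¹)···(1-q⁻ⁿ)) t^n satisfies E(q^N t) E(t)⁻¹ = Σ_{n≥0} [N choose n]_q t^n for all integers N, where [N choose n]_q is the Gaussian binomial coefficient. -/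
/- STATEMENT 11: In one variable with t^m t^n = q^{-mn} t^{m+n}: the series
E(t) = Σ_{n≥0} q^{-n²}/((1-q⁻¹)···(1-q⁻ⁿ)) t^n satisfies
E(q^N t) E(t)⁻¹ = Σ_{n≥0} [N choose n]_q t^n for all integers N. -/

open scoped Classical

abbrev SkewPS (I S : Type*) := (I →₀ ℕ) → S

noncomputable def skewMul {I S : Type*} [Fintype I] [DecidableEq I] [CommRing S] (q : Sˣ)
    (E : (I →₀ ℕ) → (I →₀ ℕ) → ℤ) (P Q : SkewPS I S) : SkewPS I S :=
  fun f => ∑ p ∈ Finset.HasAntidiagonal.antidiagonal f, ((q ^ (-(E p.2 p.1)) : Sˣ) : S) * P p.1 * Q p.2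

noncomputable def tpow {I S : Type*} [CommRing S] (d : I →₀ ℕ) : SkewPS I S :=
  fun f => if f = d then 1 else 0

noncomputable def twist {I S : Type*} [CommRing S] (q : Sˣ) (η : (I →₀ ℕ) → ℤ)
    (P : SkewPS I S) : SkewPS I S :=
  fun d => ((q ^ η d : Sˣ) : S) * P d

noncomputable abbrev K := RatFunc ℚ

noncomputable def qK : Kˣ := Units.mk0 RatFunc.X RatFunc.X_ne_zero

/-- One variable: `t^m · t^n = q^{-mn} t^{m+n}`. -/
def mulForm : (PUnit →₀ ℕ) → (PUnit →₀ ℕ) → ℤ := fun d e =>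
  (d PUnit.unit : ℤ) * (e PUnit.unit : ℤ)

/-- The quantum dilogarithm series `E(t) = Σ_{n≥0} q^{-n²}/((1-q⁻¹)···(1-q⁻ⁿ)) t^n`. -/
noncomputable def Eseries : SkewPS PUnit K := fun f =>
  (qK : K) ^ (-(f PUnit.unit : ℤ) ^ 2) *
    (∏ j ∈ Finset.range (f PUnit.unit), (1 - (qK : K) ^ (-(j + 1 : ℤ))))⁻¹

/-- The Gaussian binomial coefficient `[N choose n]_q`. -/
noncomputable def qBinom (M : ℤ) (N : ℕ) : K :=
  (∏ j ∈ Finset.range N, ((qK : K) ^ (M - j) - 1)) *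
    (∏ j ∈ Finset.range N, ((qK : K) ^ (j + 1 : ℤ) - 1))⁻¹

-- ====== auxiliary ======
namespace Aux

lemma hq : (qK : K) ≠ 0 := qK.ne_zero

lemma uc (z : ℤ) : ((qK ^ z : Kˣ) : K) = (qK : K) ^ z := Units.val_zpow_eq_zpow_val _ _

lemma qpow_ne_one (n : ℕ) : (qK : K) ^ ((n : ℤ) + 1) ≠ 1 := by
  intro h
  have h1 : ((qK : K)) ^ ((n : ℤ) + 1) = (qK : K) ^ (n + 1 : ℕ) := by
    rw [← zpow_natCast]; push_cast; ring_nf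
  have h2 : (RatFunc.X : K) ^ (n + 1) = 1 := by
    have : (qK : K) = RatFunc.X := rfl
    rwa [h1, this] at h
  have h3 : (Polynomial.X : Polynomial ℚ) ^ (n + 1) = 1 := by
    apply RatFunc.algebraMap_injective ℚ
    rw [map_pow, map_one]
    exact h2
  have := congrArg (Polynomial.eval 0) h3
  simp at this


lemma one_sub_qinv_ne_zero (j : ℕ) : (1 : K) - (qK : K) ^ (-(j + 1 : ℤ)) ≠ 0 := by
  intro h
  have hx : (qK : K) ^ (-(j + 1 : ℤ)) = 1 := (sub_eq_zero.mp h).symm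
  have h2 : (qK : K) ^ ((j : ℤ) + 1) = 1 := by
    rw [show ((j : ℤ) + 1) = -(-((j : ℤ) + 1)) by ring, zpow_neg, inv_eq_one]
    exact hx
  exact qpow_ne_one j h2

lemma qpow_sub_one_ne_zero (j : ℕ) : ((qK : K) ^ ((j : ℤ) + 1) - 1) ≠ 0 :=
  fun h => qpow_ne_one j (sub_eq_zero.mp h)

noncomputable def Cden (n : ℕ) : K := ∏ j ∈ Finset.range n, ((qK : K) ^ (j + 1 : ℤ) - 1)

lemma Cden_ne_zero (n : ℕ) : Cden n ≠ 0 :=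
  Finset.prod_ne_zero_iff.2 fun j _ => qpow_sub_one_ne_zero j

noncomputable def Pnum (M : ℤ) (n : ℕ) : K := ∏ j ∈ Finset.range n, ((qK : K) ^ (M - j) - 1)

lemma qBinom_eq (M : ℤ) (n : ℕ) : qBinom M n = Pnum M n * (Cden n)⁻¹ := rfl

noncomputable def Eco (n : ℕ) : K :=
  (qK : K) ^ (-(n : ℤ) ^ 2) * (∏ j ∈ Finset.range n, (1 - (qK : K) ^ (-(j + 1 : ℤ))))⁻¹

noncomputable def Cpr (n : ℕ) : K := ∏ j ∈ Finset.range n, (1 - (qK : K) ^ (-(j + 1 : ℤ)))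

lemma Cpr_ne_zero (n : ℕ) : Cpr n ≠ 0 :=
  Finset.prod_ne_zero_iff.2 fun j _ => one_sub_qinv_ne_zero j

lemma qBinom_zero_right (M : ℤ) : qBinom M 0 = 1 := by
  simp [qBinom]

lemma qBinom_zero_succ (n : ℕ) : qBinom 0 (n + 1) = 0 := by
  rw [qBinom_eq, Pnum]
  rw [Finset.prod_eq_zero (Finset.mem_range.2 (Nat.succ_pos n))]
  · ring
  · simp

lemma pascal (N : ℤ) (n : ℕ) :
    qBinom (N + 1) (n + 1) =
      (qK : K) ^ ((n : ℤ) + 1) * qBinom N (n + 1) + qBinom N n := by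
  have e1 : Pnum (N + 1) (n + 1) = ((qK : K) ^ (N + 1) - 1) * Pnum N n := by
    rw [Pnum, Finset.prod_range_succ', mul_comm]
    congr 1
    · congr 1
      push_cast; ring
    · rw [Pnum]
      apply Finset.prod_congr rfl
      intro k _
      congr 2
      push_cast; ring
  have e2 : Pnum N (n + 1) = Pnum N n * ((qK : K) ^ (N - n) - 1) := by
    rw [Pnum, Finset.prod_range_succ]; rfl
  have e3 : Cden (n + 1) = Cden n * ((qK : K) ^ ((n : ℤ) + 1) - 1) := by
    rw [Cden, Cden, Finset.prod_range_succ]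
  rw [qBinom_eq, qBinom_eq, qBinom_eq, e1, e2, e3]
  have hC := Cden_ne_zero n
  have hu := qpow_sub_one_ne_zero n
  have hqq : (qK : K) ^ ((n : ℤ) + 1) * (qK : K) ^ (N - n) = (qK : K) ^ (N + 1) := by
    rw [← zpow_add₀ hq]; ring_nf
  field_simp
  linear_combination (-(Pnum N n)) * hqq

lemma Eco_rec (b : ℕ) :
    ((qK : K) ^ ((b : ℤ) + 1) - 1) * Eco (b + 1) = (qK : K) ^ (-(b : ℤ)) * Eco b := by
  have e3 : Cpr (b + 1) = Cpr b * (1 - (qK : K) ^ (-((b : ℤ) + 1))) := by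
    rw [Cpr, Cpr, Finset.prod_range_succ]
  have hE1 : Eco (b + 1) = (qK : K) ^ (-((b : ℤ) + 1) ^ 2) * (Cpr (b + 1))⁻¹ := by
    rw [Eco, Cpr]
    norm_cast
  have hE0 : Eco b = (qK : K) ^ (-(b : ℤ) ^ 2) * (Cpr b)⁻¹ := rfl
  have honemul : (qK : K) ^ ((b : ℤ) + 1) * (qK : K) ^ (-((b : ℤ) + 1)) = 1 := by
    rw [← zpow_add₀ hq, show ((b : ℤ) + 1) + (-((b : ℤ) + 1)) = 0 by ring, zpow_zero]
  have key : ((qK : K) ^ ((b : ℤ) + 1) - 1) =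
      (qK : K) ^ ((b : ℤ) + 1) * (1 - (qK : K) ^ (-((b : ℤ) + 1))) := by
    rw [mul_sub, mul_one, honemul]
  have h1 : (1 : K) - (qK : K) ^ (-((b : ℤ) + 1)) ≠ 0 := one_sub_qinv_ne_zero b
  have hzz : (qK : K) ^ ((b : ℤ) + 1) * (qK : K) ^ (-((b : ℤ) + 1) ^ 2) =
      (qK : K) ^ (-(b : ℤ)) * (qK : K) ^ (-(b : ℤ) ^ 2) := by
    rw [← zpow_add₀ hq, ← zpow_add₀ hq]
    congr 1
    ring
  rw [hE1, hE0, e3, key, mul_inv]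
  calc (qK : K) ^ ((b : ℤ) + 1) * (1 - (qK : K) ^ (-((b : ℤ) + 1))) *
        ((qK : K) ^ (-((b : ℤ) + 1) ^ 2) * ((Cpr b)⁻¹ * (1 - (qK : K) ^ (-((b : ℤ) + 1)))⁻¹))
      = (qK : K) ^ ((b : ℤ) + 1) * (qK : K) ^ (-((b : ℤ) + 1) ^ 2) * (Cpr b)⁻¹ *
        ((1 - (qK : K) ^ (-((b : ℤ) + 1))) * (1 - (qK : K) ^ (-((b : ℤ) + 1)))⁻¹) := by ring
    _ = (qK : K) ^ (-(b : ℤ)) * ((qK : K) ^ (-(b : ℤ) ^ 2) * (Cpr b)⁻¹) := by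
        rw [mul_inv_cancel₀ h1, mul_one, hzz]; ring

end Aux
namespace Aux

noncomputable def S (N : ℤ) (m : ℕ) : K :=
  ∑ p ∈ Finset.HasAntidiagonal.antidiagonal m,
    (qK : K) ^ (-((p.2 : ℤ) * (p.1 : ℤ))) * qBinom N p.1 * Eco p.2

lemma step (N : ℤ) (m : ℕ) : S (N + 1) m = (qK : K) ^ (m : ℤ) * S N m := by
  cases m with
  | zero => simp [S, qBinom_zero_right]
  | succ k =>
      have hterm : ∀ p : ℕ × ℕ,
          (qK : K) ^ (-((p.2 : ℤ) * ((p.1 + 1 : ℕ) : ℤ))) * qBinom (N + 1) (p.1 + 1) * Eco p.2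
            = (qK : K) ^ (((p.1 + 1 : ℕ) : ℤ) - (p.2 : ℤ) * ((p.1 + 1 : ℕ) : ℤ)) *
                qBinom N (p.1 + 1) * Eco p.2
              + (qK : K) ^ (-((p.2 : ℤ) * ((p.1 + 1 : ℕ) : ℤ))) * qBinom N p.1 * Eco p.2 := by
        intro p
        rw [show ((p.1 + 1 : ℕ) : ℤ) = (p.1 : ℤ) + 1 from by push_cast; ring]
        rw [pascal]
        have hm : (qK : K) ^ (-((p.2 : ℤ) * ((p.1 : ℤ) + 1))) * (qK : K) ^ ((p.1 : ℤ) + 1)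
            = (qK : K) ^ (((p.1 : ℤ) + 1) - (p.2 : ℤ) * ((p.1 : ℤ) + 1)) := by
          rw [← zpow_add₀ hq]; congr 1; ring
        linear_combination (qBinom N (p.1 + 1) * Eco p.2) * hm
      have T1 : S (N + 1) (k + 1) =
          (∑ p ∈ Finset.HasAntidiagonal.antidiagonal (k + 1),
            (qK : K) ^ ((p.1 : ℤ) - (p.2 : ℤ) * (p.1 : ℤ)) * qBinom N p.1 * Eco p.2) +
          ∑ p ∈ Finset.HasAntidiagonal.antidiagonal k,
            (qK : K) ^ (-((p.2 : ℤ) * ((p.1 + 1 : ℕ) : ℤ))) * qBinom N p.1 * Eco p.2 := by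
        rw [S, Finset.Nat.sum_antidiagonal_succ,
          Finset.Nat.sum_antidiagonal_succ
            (f := fun p => (qK : K) ^ ((p.1 : ℤ) - (p.2 : ℤ) * (p.1 : ℤ)) *
              qBinom N p.1 * Eco p.2),
          add_assoc, ← Finset.sum_add_distrib]
        have hhead : (qK : K) ^ (-((((k + 1 : ℕ)) : ℤ) * (((0 : ℕ)) : ℤ))) *
              qBinom (N + 1) 0 * Eco (k + 1)
            = (qK : K) ^ ((((0 : ℕ)) : ℤ) - (((k + 1 : ℕ)) : ℤ) * (((0 : ℕ)) : ℤ)) *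
              qBinom N 0 * Eco (k + 1) := by
          norm_num [qBinom_zero_right]
        have htail : (∑ p ∈ Finset.HasAntidiagonal.antidiagonal k,
              (qK : K) ^ (-((p.2 : ℤ) * ((p.1 + 1 : ℕ) : ℤ))) * qBinom (N + 1) (p.1 + 1) *
                Eco p.2)
            = ∑ p ∈ Finset.HasAntidiagonal.antidiagonal k,
              ((qK : K) ^ (((p.1 + 1 : ℕ) : ℤ) - (p.2 : ℤ) * ((p.1 + 1 : ℕ) : ℤ)) *
                  qBinom N (p.1 + 1) * Eco p.2
                + (qK : K) ^ (-((p.2 : ℤ) * ((p.1 + 1 : ℕ) : ℤ))) * qBinom N p.1 * Eco p.2) :=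
          Finset.sum_congr rfl fun p _ => hterm p
        exact congrArg₂ (· + ·) hhead htail
      have T2 : ∀ p ∈ Finset.HasAntidiagonal.antidiagonal k,
          (qK : K) ^ (-((p.2 : ℤ) * ((p.1 + 1 : ℕ) : ℤ))) * qBinom N p.1 * Eco p.2
            = (qK : K) ^ ((p.1 : ℤ) - ((p.2 + 1 : ℕ) : ℤ) * (p.1 : ℤ)) *
              ((qK : K) ^ ((p.2 + 1 : ℕ) : ℤ) - 1) * qBinom N p.1 * Eco (p.2 + 1) := by
        intro p _
        rw [show ((p.1 + 1 : ℕ) : ℤ) = (p.1 : ℤ) + 1 from by push_cast; ring,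
          show ((p.2 + 1 : ℕ) : ℤ) = (p.2 : ℤ) + 1 from by push_cast; ring]
        have hrec := Eco_rec p.2
        have hm : (qK : K) ^ ((p.1 : ℤ) - ((p.2 : ℤ) + 1) * (p.1 : ℤ)) * (qK : K) ^ (-(p.2 : ℤ))
            = (qK : K) ^ (-((p.2 : ℤ) * ((p.1 : ℤ) + 1))) := by
          rw [← zpow_add₀ hq]; congr 1; ring
        linear_combination
          (-((qK : K) ^ ((p.1 : ℤ) - ((p.2 : ℤ) + 1) * (p.1 : ℤ)) * qBinom N p.1)) * hrec
            + (-(qBinom N p.1 * Eco p.2)) * hm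
      have T2' := Finset.sum_congr rfl T2
      have T3 : (∑ p ∈ Finset.HasAntidiagonal.antidiagonal (k + 1),
            (qK : K) ^ ((p.1 : ℤ) - (p.2 : ℤ) * (p.1 : ℤ)) * ((qK : K) ^ (p.2 : ℤ) - 1) *
              qBinom N p.1 * Eco p.2)
          = ∑ p ∈ Finset.HasAntidiagonal.antidiagonal k,
            (qK : K) ^ ((p.1 : ℤ) - ((p.2 + 1 : ℕ) : ℤ) * (p.1 : ℤ)) *
              ((qK : K) ^ ((p.2 + 1 : ℕ) : ℤ) - 1) * qBinom N p.1 * Eco (p.2 + 1) := by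
        rw [Finset.Nat.sum_antidiagonal_succ'
          (f := fun p => (qK : K) ^ ((p.1 : ℤ) - (p.2 : ℤ) * (p.1 : ℤ)) *
            ((qK : K) ^ (p.2 : ℤ) - 1) * qBinom N p.1 * Eco p.2)]
        have hz : (qK : K) ^ ((((k + 1 : ℕ)) : ℤ) - (((0 : ℕ)) : ℤ) * (((k + 1 : ℕ)) : ℤ)) *
            ((qK : K) ^ (((0 : ℕ)) : ℤ) - 1) * qBinom N (k + 1) * Eco 0 = 0 := by
          norm_num
        rw [hz, zero_add]
      have T4 : (∑ p ∈ Finset.HasAntidiagonal.antidiagonal (k + 1),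
            (qK : K) ^ ((p.1 : ℤ) - (p.2 : ℤ) * (p.1 : ℤ)) * qBinom N p.1 * Eco p.2) +
          (∑ p ∈ Finset.HasAntidiagonal.antidiagonal (k + 1),
            (qK : K) ^ ((p.1 : ℤ) - (p.2 : ℤ) * (p.1 : ℤ)) * ((qK : K) ^ (p.2 : ℤ) - 1) *
              qBinom N p.1 * Eco p.2)
          = (qK : K) ^ ((k + 1 : ℕ) : ℤ) * S N (k + 1) := by
        rw [S, Finset.mul_sum, ← Finset.sum_add_distrib]
        refine Finset.sum_congr rfl fun p hp => ?_
        rw [Finset.HasAntidiagonal.mem_antidiagonal] at hp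
        have hab := congrArg (fun n : ℕ => (n : ℤ)) hp
        push_cast at hab
        have hm : (qK : K) ^ ((p.1 : ℤ) - (p.2 : ℤ) * (p.1 : ℤ)) * (qK : K) ^ ((p.2 : ℤ))
            = (qK : K) ^ (((k + 1 : ℕ)) : ℤ) * (qK : K) ^ (-((p.2 : ℤ) * (p.1 : ℤ))) := by
          rw [← zpow_add₀ hq, ← zpow_add₀ hq]; congr 1; push_cast; linarith
        linear_combination (qBinom N p.1 * Eco p.2) * hm
      rw [T1, T2', ← T3]
      exact T4

end Aux
namespace Aux

lemma key (N : ℤ) (m : ℕ) : S N m = (qK : K) ^ (N * m) * Eco m := by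
  induction N using Int.induction_on with
  | zero =>
      rw [S, Finset.sum_eq_single (0, m)]
      · simp [qBinom_zero_right]
      · intro p hp hne
        rw [Finset.HasAntidiagonal.mem_antidiagonal] at hp
        match p, hp, hne with
        | (0, b), hp, hne =>
            exfalso; apply hne
            simp at hp; simp [hp]
        | (Nat.succ a, b), hp, hne =>
            rw [qBinom_zero_succ]; ring
      · intro habs
        exact absurd (Finset.HasAntidiagonal.mem_antidiagonal.mpr (by simp)) habs
  | succ i ih =>
      rw [step, ih, ← mul_assoc, ← zpow_add₀ hq]
      congr 2
      ring
  | pred i ih =>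
      have h := step (-i - 1) m
      rw [show (-(i : ℤ) - 1 + 1 : ℤ) = -i by ring] at h
      have hqm : (qK : K) ^ (m : ℤ) ≠ 0 := zpow_ne_zero _ hq
      apply mul_left_cancel₀ hqm
      rw [← h, ih, ← mul_assoc, ← zpow_add₀ hq]
      congr 2
      ring

lemma Eseries_eq (g : PUnit →₀ ℕ) : Eseries g = Eco (g PUnit.unit) := rfl

lemma sum_ad_punit (f : PUnit →₀ ℕ) (F : ℕ → ℕ → K) :
    ∑ p ∈ Finset.HasAntidiagonal.antidiagonal f, F (p.1 PUnit.unit) (p.2 PUnit.unit)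
      = ∑ p ∈ Finset.HasAntidiagonal.antidiagonal (f PUnit.unit), F p.1 p.2 := by
  apply Finset.sum_nbij' (i := fun p => (p.1 PUnit.unit, p.2 PUnit.unit))
    (j := fun p => (Finsupp.single PUnit.unit p.1, Finsupp.single PUnit.unit p.2))
  · intro p hp
    rw [Finset.HasAntidiagonal.mem_antidiagonal] at hp ⊢
    rw [← hp]; simp
  · intro p hp
    rw [Finset.HasAntidiagonal.mem_antidiagonal] at hp ⊢
    rw [← Finsupp.single_add, hp]
    exact (Finsupp.unique_single f).symm
  · intro p _
    have h1 : Finsupp.single PUnit.unit (p.1 PUnit.unit) = p.1 := (Finsupp.unique_single p.1).symm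
    have h2 : Finsupp.single PUnit.unit (p.2 PUnit.unit) = p.2 := (Finsupp.unique_single p.2).symm
    rw [h1, h2]
  · intro p _
    simp [Finsupp.single_eq_same]
  · intro p _
    rfl

lemma skewMul_assoc (P Q R : SkewPS PUnit K) :
    skewMul qK mulForm (skewMul qK mulForm P Q) R
      = skewMul qK mulForm P (skewMul qK mulForm Q R) := by
  funext f
  simp only [skewMul, Finset.sum_mul, Finset.mul_sum]
  rw [Finset.sum_sigma', Finset.sum_sigma']
  apply Finset.sum_nbij'
    (i := fun x => ⟨(x.snd.1, x.snd.2 + x.fst.2), (x.snd.2, x.fst.2)⟩)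
    (j := fun x => ⟨(x.fst.1 + x.snd.1, x.snd.2), (x.fst.1, x.snd.1)⟩)
  · intro x hx
    simp only [Finset.mem_sigma, Finset.HasAntidiagonal.mem_antidiagonal] at hx ⊢
    obtain ⟨h1, h2⟩ := hx
    exact ⟨by rw [← add_assoc, h2, h1], trivial⟩
  · intro x hx
    simp only [Finset.mem_sigma, Finset.HasAntidiagonal.mem_antidiagonal] at hx ⊢
    obtain ⟨h1, h2⟩ := hx
    exact ⟨by rw [add_assoc, h2, h1], trivial⟩
  · intro x hx
    simp only [Finset.mem_sigma, Finset.HasAntidiagonal.mem_antidiagonal] at hx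
    obtain ⟨h1, h2⟩ := hx
    refine Sigma.ext ?_ ?_
    · simp [h2]
    · simp
  · intro x hx
    simp only [Finset.mem_sigma, Finset.HasAntidiagonal.mem_antidiagonal] at hx
    obtain ⟨h1, h2⟩ := hx
    refine Sigma.ext ?_ ?_
    · simp [h2]
    · simp
  · intro x hx
    simp only [Finset.mem_sigma, Finset.HasAntidiagonal.mem_antidiagonal] at hx
    obtain ⟨h1, h2⟩ := hx
    simp only [uc]
    have hc : (qK : K) ^ (-(mulForm x.fst.2 x.fst.1)) * (qK : K) ^ (-(mulForm x.snd.2 x.snd.1))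
        = (qK : K) ^ (-(mulForm (x.snd.2 + x.fst.2) x.snd.1)) *
          (qK : K) ^ (-(mulForm x.fst.2 x.snd.2)) := by
      rw [← zpow_add₀ hq, ← zpow_add₀ hq]
      congr 1
      simp only [mulForm, ← h2, Finsupp.add_apply]
      push_cast
      ring
    linear_combination (P x.snd.1 * Q x.snd.2 * R x.fst.2) * hc

lemma skewMul_tpow_zero (P : SkewPS PUnit K) : skewMul qK mulForm P (tpow 0) = P := by
  funext f
  rw [skewMul, Finset.sum_eq_single (f, 0)]
  · simp [tpow, mulForm]
  · intro p hp hne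
    rw [Finset.HasAntidiagonal.mem_antidiagonal] at hp
    have h2 : p.2 ≠ 0 := by
      intro h0
      apply hne
      have h1 : p.1 = f := by rw [← hp, h0, add_zero]
      exact Prod.ext h1 h0
    simp [tpow, h2]
  · intro habs
    exact absurd (Finset.HasAntidiagonal.mem_antidiagonal.mpr (by simp)) habs

end Aux


theorem E_twist_gives_gaussian_binomials
    (Einv : SkewPS PUnit K)
    (hinv : skewMul qK mulForm Eseries Einv = tpow 0)
    (hinv' : skewMul qK mulForm Einv Eseries = tpow 0)
    (N : ℤ) :
    skewMul qK mulForm (twist qK (fun f => N * (f PUnit.unit : ℤ)) Eseries) Einv =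
      fun f => qBinom N (f PUnit.unit) := by
  have hGE : skewMul qK mulForm (fun f => qBinom N (f PUnit.unit)) Eseries
      = twist qK (fun f => N * (f PUnit.unit : ℤ)) Eseries := by
    funext f
    have lhs_eq : skewMul qK mulForm (fun f => qBinom N (f PUnit.unit)) Eseries f
        = Aux.S N (f PUnit.unit) := by
      simp only [skewMul, mulForm, Aux.uc, Aux.Eseries_eq]
      exact Aux.sum_ad_punit f
        (fun a b => (qK : K) ^ (-((b : ℤ) * (a : ℤ))) * qBinom N a * Aux.Eco b)
    rw [lhs_eq, Aux.key]
    simp only [twist, Aux.uc, Aux.Eseries_eq]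
  rw [← hGE, Aux.skewMul_assoc, hinv, Aux.skewMul_tpow_zero]
end

section
/- Order the vertices I = {i₁,...,i_r} of the quiver so that k > l whenever there is an arrow i_k → i_l. Then in the skew power series ring A, the product P_{i₁}(t)···P_{i_r}(t) equals P(t) = Σ_{d∈ℕ^I} e_d(q) t^d, where P_i(t) = Σ_{n≥0} q^{-n²} Π_{j=1}^n (1-q^{-j})⁻¹ t^{n·i} and e_d(q) = q^{-⟨d,d⟩} Π_{i∈I} Π_{j=1}^{d_i} (1-q^{-j})⁻¹. -/
/- STATEMENT 14: Order the vertices I = {i₁,...,i_r} of the quiver so that k > l whenever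
there is an arrow i_k → i_l. Then in the skew power series ring A, the product
P_{i₁}(t)···P_{i_r}(t) equals P(t) = Σ_{d∈ℕ^I} e_d(q) t^d. -/

open scoped Classical

/-- `e_d(q) = q^{-⟨d,d⟩} Π_{i∈I} Π_{j=1}^{d_i} (1-q^{-j})⁻¹`. -/
noncomputable def eCoeff {I : Type*} [Fintype I] (E : (I →₀ ℕ) → (I →₀ ℕ) → ℤ)
    (d : I →₀ ℕ) : K :=
  (qK : K) ^ (-(E d d)) *
    ∏ i : I, ∏ j ∈ Finset.range (d i), (1 - (qK : K) ^ (-(j + 1 : ℤ)))⁻¹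

/-- The series supported on the ray `ℕ·d` with coefficient `c n` at `t^{nd}`. -/
noncomputable def alongRay {I : Type*} (d : I →₀ ℕ) (c : ℕ → K) : SkewPS I K :=
  fun f => if h : ∃ n : ℕ, f = n • d then c h.choose else 0

/-- `q^{-n²} Π_{j=1}^n (1-q^{-j})⁻¹`, the coefficients of `P_i(t)`. -/
noncomputable def expCoeff (n : ℕ) : K :=
  (qK : K) ^ (-(n : ℤ) ^ 2) * (∏ j ∈ Finset.range n, (1 - (qK : K) ^ (-(j + 1 : ℤ))))⁻¹


section Aux

lemma qK_ne_zero : (qK : K) ≠ 0 := qK.ne_zero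

lemma zpow_sum' {ι : Type*} (x : K) (hx : x ≠ 0) (s : Finset ι) (f : ι → ℤ) :
    x ^ (∑ i ∈ s, f i) = ∏ i ∈ s, x ^ f i := by
  classical
  refine Finset.cons_induction_on s ?_ ?_
  · simp
  · intro a s ha ih
    rw [Finset.sum_cons, Finset.prod_cons, zpow_add₀ hx, ih]

lemma alongRay_smul {I : Type*} (d : I →₀ ℕ) (hd : d ≠ 0) (c : ℕ → K) (n : ℕ) :
    alongRay d c (n • d) = c n := by
  unfold alongRay
  rw [dif_pos ⟨n, rfl⟩]
  congr 1
  have h : ∃ m : ℕ, n • d = m • d := ⟨n, rfl⟩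
  have hs := h.choose_spec
  obtain ⟨i, hi⟩ : ∃ i, d i ≠ 0 := by
    by_contra hc; push_neg at hc; exact hd (Finsupp.ext hc)
  have hni : n * d i = h.choose * d i := by
    have := congrArg (fun f : I →₀ ℕ => f i) hs
    simpa [Finsupp.smul_apply] using this
  exact (Nat.eq_of_mul_eq_mul_right (Nat.pos_of_ne_zero hi) hni).symm

lemma alongRay_eq_zero {I : Type*} (d : I →₀ ℕ) (c : ℕ → K) (p : I →₀ ℕ)
    (h : ∀ n : ℕ, p ≠ n • d) : alongRay d c p = 0 :=
  dif_neg (fun ⟨n, hn⟩ => h n hn)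

lemma eulerForm_single_right {r : ℕ} (a : Fin r → Fin r → ℕ) (d : Fin r →₀ ℕ)
    (k : Fin r) (m : ℕ) :
    eulerForm a d (Finsupp.single k m) =
      (d k : ℤ) * m - ∑ i, (a i k : ℤ) * d i * m := by
  unfold eulerForm
  congr 1
  · rw [Finset.sum_eq_single k]
    · simp
    · intro b _ hb; simp [Finsupp.single_apply, (Ne.symm hb)]
    · simp
  · refine Finset.sum_congr rfl (fun i _ => ?_)
    rw [Finset.sum_eq_single k]
    · simp
    · intro b _ hb; simp [Finsupp.single_apply, (Ne.symm hb)]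
    · simp

lemma key_lemma (r : ℕ) (a : Fin r → Fin r → ℕ) (hord : ∀ k l, a k l ≠ 0 → l < k) :
    ∀ (L : List (Fin r)), L.Pairwise (· < ·) → ∀ d : Fin r →₀ ℕ,
    ((L.map (fun i => alongRay (Finsupp.single i 1) expCoeff)).foldr
        (skewMul qK (eulerForm a)) (tpow 0)) d
      = if ∀ i, i ∉ L → d i = 0 then
          (qK : K) ^ (∑ i ∈ L.toFinset, ∑ j ∈ L.toFinset, (a i j : ℤ) * d i * d j) *
            ∏ i ∈ L.toFinset, expCoeff (d i)
        else 0 := by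
  intro L
  induction L with
  | nil =>
    intro _ d
    simp only [List.map_nil, List.foldr_nil, tpow, List.not_mem_nil, not_false_iff,
      true_implies, List.toFinset_nil]
    by_cases h : d = 0
    · subst h; simp
    · rw [if_neg h, if_neg]
      intro hc
      exact h (Finsupp.ext hc)
  | cons k L' IH =>
    intro hs d
    have hs' : L'.Pairwise (· < ·) := (List.pairwise_cons.mp hs).2
    have hk : ∀ j ∈ L', k < j := (List.pairwise_cons.mp hs).1
    have hkL' : k ∉ L' := fun h => lt_irrefl k (hk k h)
    have hkF : k ∉ L'.toFinset := by simpa using hkL'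
    set F := ((L'.map (fun i => alongRay (Finsupp.single i 1) expCoeff)).foldr
        (skewMul qK (eulerForm a)) (tpow 0)) with hF
    simp only [List.map_cons, List.foldr_cons]
    show skewMul qK (eulerForm a) (alongRay (Finsupp.single k 1) expCoeff) F d = _
    unfold skewMul
    set p₁₀ : Fin r →₀ ℕ := Finsupp.single k (d k) with hp₁₀
    set p₂₀ : Fin r →₀ ℕ := d.erase k with hp₂₀
    have hvan : ∀ p₁ p₂ : Fin r →₀ ℕ, p₁ + p₂ = d →
        ((qK ^ (-(eulerForm a p₂ p₁)) : Kˣ) : K) *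
          alongRay (Finsupp.single k 1) expCoeff p₁ * F p₂ ≠ 0 →
        p₁ = p₁₀ ∧ p₂ = p₂₀ ∧ ∀ i, i ∉ (k :: L') → d i = 0 := by
      intro p₁ p₂ hsum hne
      have h1 : alongRay (Finsupp.single k 1) expCoeff p₁ ≠ 0 := fun h => hne (by simp [h])
      have h2 : F p₂ ≠ 0 := fun h => hne (by simp [h])
      obtain ⟨n, hn⟩ : ∃ n : ℕ, p₁ = n • Finsupp.single k 1 := by
        by_contra hc; push_neg at hc
        exact h1 (alongRay_eq_zero _ _ _ hc)
      have hn' : p₁ = Finsupp.single k n := by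
        rw [hn, Finsupp.smul_single]; simp
      have hcond2 : ∀ i, i ∉ L' → p₂ i = 0 := by
        by_contra hc
        exact h2 (by show F p₂ = 0; rw [IH hs' p₂, if_neg hc])
      have hp2k : p₂ k = 0 := hcond2 k hkL'
      have hdk : d k = n := by
        rw [← hsum]
        simp [hn', hp2k, Finsupp.single_apply]
      have hq1 : p₁ = p₁₀ := by rw [hn', hp₁₀, hdk]
      have hq2 : p₂ = p₂₀ := by
        ext i
        by_cases hik : i = k
        · subst hik; simp [hp₂₀, Finsupp.erase_same, hp2k]
        · have := congrArg (fun f : Fin r →₀ ℕ => f i) hsum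
          simp only [Finsupp.add_apply] at this
          rw [hn'] at this
          simp [Finsupp.single_apply, Ne.symm hik] at this
          simp [hp₂₀, Finsupp.erase_ne hik, ← this]
      refine ⟨hq1, hq2, ?_⟩
      intro i hi
      simp only [List.mem_cons, not_or] at hi
      have := congrArg (fun f : Fin r →₀ ℕ => f i) hsum
      simp only [Finsupp.add_apply] at this
      rw [hn'] at this
      rw [← this, Finsupp.single_apply, if_neg (fun h => hi.1 h.symm),
        hcond2 i hi.2, add_zero]
    by_cases hcond : ∀ i, i ∉ (k :: L') → d i = 0
    · rw [if_pos hcond]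
      have hmem : (p₁₀, p₂₀) ∈ Finset.HasAntidiagonal.antidiagonal d := by
        rw [Finset.HasAntidiagonal.mem_antidiagonal]
        exact Finsupp.single_add_erase k d
      rw [Finset.sum_eq_single_of_mem (p₁₀, p₂₀) hmem]
      swap
      · intro b hb hbne
        by_contra hne
        obtain ⟨h1, h2, _⟩ := hvan b.1 b.2 (Finset.HasAntidiagonal.mem_antidiagonal.mp hb) hne
        exact hbne (Prod.ext h1 h2)
      -- evaluate the distinguished term
      have hray : alongRay (Finsupp.single k 1) expCoeff p₁₀ = expCoeff (d k) := by
        have : p₁₀ = (d k) • Finsupp.single k (1 : ℕ) := by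
          rw [Finsupp.smul_single]; simp [hp₁₀]
        rw [this, alongRay_smul _ (fun h => one_ne_zero (Finsupp.single_eq_zero.mp h))]
      have hcond' : ∀ i, i ∉ L' → p₂₀ i = 0 := by
        intro i hi
        by_cases hik : i = k
        · subst hik; simp [hp₂₀]
        · rw [hp₂₀, Finsupp.erase_ne hik]
          exact hcond i (by simp [hik, hi])
      have hFval : F p₂₀ = (qK : K) ^
            (∑ i ∈ L'.toFinset, ∑ j ∈ L'.toFinset, (a i j : ℤ) * d i * d j) *
          ∏ i ∈ L'.toFinset, expCoeff (d i) := by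
        rw [IH hs' p₂₀, if_pos hcond']
        congr 1
        · congr 1
          refine Finset.sum_congr rfl (fun i hi => Finset.sum_congr rfl (fun j hj => ?_))
          have hik : i ≠ k := by rintro rfl; exact hkF hi
          have hjk : j ≠ k := by rintro rfl; exact hkF hj
          rw [hp₂₀, Finsupp.erase_ne hik, Finsupp.erase_ne hjk]
        · refine Finset.prod_congr rfl (fun i hi => ?_)
          have hik : i ≠ k := by rintro rfl; exact hkF hi
          rw [hp₂₀, Finsupp.erase_ne hik]
      -- the euler form value
      have hE : eulerForm a p₂₀ p₁₀ =
          -∑ i ∈ L'.toFinset, (a i k : ℤ) * d i * d k := by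
        rw [hp₁₀, eulerForm_single_right]
        have h0 : (p₂₀ k : ℤ) = 0 := by simp [hp₂₀]
        rw [h0, zero_mul, zero_sub, neg_inj]
        rw [← Finset.sum_subset (Finset.subset_univ L'.toFinset)]
        · refine Finset.sum_congr rfl (fun i hi => ?_)
          have hik : i ≠ k := by rintro rfl; exact hkF hi
          rw [hp₂₀, Finsupp.erase_ne hik]
        · intro i _ hi
          have : p₂₀ i = 0 := by
            by_cases hik : i = k
            · subst hik; simp [hp₂₀]
            · rw [hp₂₀, Finsupp.erase_ne hik]
              refine hcond i ?_
              simp only [List.mem_cons, not_or]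
              exact ⟨hik, fun h => hi (List.mem_toFinset.mpr h)⟩
          rw [this]; simp
      rw [hray, hFval, hE]
      rw [Units.val_zpow_eq_zpow_val]
      rw [List.toFinset_cons]
      rw [Finset.sum_insert hkF, Finset.prod_insert hkF]
      have hak : ∀ j ∈ insert k L'.toFinset, (a k j : ℤ) = 0 := by
        intro j hj
        rcases Finset.mem_insert.mp hj with h | h
        · by_contra hne
          have hlt := hord k j (by exact_mod_cast hne)
          rw [h] at hlt
          exact lt_irrefl k hlt
        · by_contra hne
          exact absurd (hord k j (by exact_mod_cast hne)) (not_lt.mpr (le_of_lt (hk j (List.mem_toFinset.mp h))))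
      have hz1 : ∑ j ∈ insert k L'.toFinset, (a k j : ℤ) * d k * d j = 0 :=
        Finset.sum_eq_zero (fun j hj => by rw [hak j hj, zero_mul, zero_mul])
      have hsplit : ∀ i, ∑ j ∈ insert k L'.toFinset, (a i j : ℤ) * d i * d j
          = (a i k : ℤ) * d i * d k + ∑ j ∈ L'.toFinset, (a i j : ℤ) * d i * d j :=
        fun i => Finset.sum_insert hkF
      rw [hz1, zero_add]
      rw [Finset.sum_congr rfl (fun i _ => hsplit i), Finset.sum_add_distrib]
      rw [zpow_add₀ qK_ne_zero, neg_neg]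
      ring
    · rw [if_neg hcond]
      apply Finset.sum_eq_zero
      intro p hp
      by_contra hne
      exact hcond (hvan p.1 p.2 (Finset.HasAntidiagonal.mem_antidiagonal.mp hp) hne).2.2

end Aux

theorem product_over_vertices_eq_full_series
    (r : ℕ) (a : Fin r → Fin r → ℕ)
    -- no oriented cycles, vertices ordered so that arrows i_k → i_l have l < k
    (hord : ∀ k l, a k l ≠ 0 → l < k) :
    ((List.finRange r).map
        (fun i => alongRay (Finsupp.single i 1) expCoeff)).foldr
      (skewMul qK (eulerForm a)) (tpow 0) =
    fun d => eCoeff (eulerForm a) d := by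
  funext d
  rw [key_lemma r a hord (List.finRange r) (List.pairwise_lt_finRange r) d]
  rw [if_pos (fun i hi => absurd (List.mem_finRange i) hi)]
  rw [List.toFinset_finRange]
  unfold eCoeff expCoeff eulerForm
  rw [Finset.prod_mul_distrib]
  rw [← zpow_sum' _ qK_ne_zero]
  rw [← mul_assoc, ← zpow_add₀ qK_ne_zero]
  rw [Finset.prod_congr rfl (fun i _ => (Finset.prod_inv_distrib _).symm)]
  congr 1
  · congr 1
    rw [Finset.sum_neg_distrib, sub_eq_add_neg]
    have h2 : ∑ i : Fin r, (d i : ℤ) ^ 2 = ∑ i : Fin r, (d i : ℤ) * (d i : ℤ) :=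
      Finset.sum_congr rfl (fun i _ => by ring)
    rw [h2]
    ring
end

section
/- In every representation M of a quiver Q over a field, with a fixed stability Θ and slope μ(d) = Θ(d)/dim(d), there exists a unique Harder-Narasimhan filtration 0 = M₀ ⊂ M₁ ⊂ ... ⊂ M_s = M such that each subquotient M_i/M_{i-1} is semistable and μ(M₁/M₀) > μ(M₂/M₁) > ... > μ(M_s/M_{s-1}). -/
/- STATEMENT 17: Every representation M of a quiver Q over a field, with a fixed stability
Θ and slope μ(d) = Θ(d)/dim(d), has a unique Harder-Narasimhan filtration
0 = M₀ ⊂ M₁ ⊂ ... ⊂ M_s = M with semistable subquotients of strictly decreasing slope. -/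

open scoped Classical

variable {k : Type*} [Field k] {I : Type*} [Fintype I]

/-- A subrepresentation of the representation `M` (given by linear maps for the arrows of
the quiver with `a i j` arrows from `i` to `j`): a tuple of subspaces stable under all
maps. -/
def IsSubrep {a : I → I → ℕ} {d : I → ℕ}
    (M : ∀ i j : I, Fin (a i j) → ((Fin (d i) → k) →ₗ[k] (Fin (d j) → k)))
    (U : ∀ i : I, Submodule k (Fin (d i) → k)) : Prop :=
  ∀ (i j : I) (α : Fin (a i j)), (U i).map (M i j α) ≤ U j

/-- The dimension vector of the subquotient `W'/W`. -/
noncomputable def sqDim {d : I → ℕ} (W W' : ∀ i : I, Submodule k (Fin (d i) → k)) :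
    I → ℕ := fun i => Module.finrank k (W' i) - Module.finrank k (W i)

/-- The slope `μ(n) = Θ(n)/dim n` of a dimension vector. -/
noncomputable def slopeV (Θ : I → ℚ) (n : I → ℕ) : ℚ :=
  (∑ i, Θ i * (n i : ℚ)) / (∑ i, (n i : ℚ))

/-- Semistability of the subquotient `W'/W`: every nonzero subrepresentation
`U/W ⊆ W'/W` satisfies `μ(U/W) ≤ μ(W'/W)`. -/
def SemistableSq {a : I → I → ℕ} {d : I → ℕ} (Θ : I → ℚ)
    (M : ∀ i j : I, Fin (a i j) → ((Fin (d i) → k) →ₗ[k] (Fin (d j) → k)))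
    (W W' : ∀ i : I, Submodule k (Fin (d i) → k)) : Prop :=
  ∀ U : ∀ i : I, Submodule k (Fin (d i) → k), IsSubrep M U →
    (∀ i, W i ≤ U i) → (∀ i, U i ≤ W' i) → sqDim W U ≠ 0 →
    slopeV Θ (sqDim W U) ≤ slopeV Θ (sqDim W W')

/-- `(s, F)` is a Harder-Narasimhan filtration of `M`:
`0 = F 0 ⊂ F 1 ⊂ ... ⊂ F s = M` (constant beyond `s`), all terms subrepresentations,
with semistable subquotients of strictly decreasing slopes. -/
def IsHNFiltration {a : I → I → ℕ} {d : I → ℕ} (Θ : I → ℚ)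
    (M : ∀ i j : I, Fin (a i j) → ((Fin (d i) → k) →ₗ[k] (Fin (d j) → k)))
    (p : ℕ × (ℕ → ∀ i : I, Submodule k (Fin (d i) → k))) : Prop :=
  (∀ i, p.2 0 i = ⊥) ∧
  (∀ i, p.2 p.1 i = ⊤) ∧
  (∀ n, n ≥ p.1 → p.2 n = p.2 p.1) ∧
  (∀ n, IsSubrep M (p.2 n)) ∧
  (∀ n < p.1, ∀ i, p.2 n i ≤ p.2 (n + 1) i) ∧
  (∀ n < p.1, p.2 n ≠ p.2 (n + 1)) ∧
  (∀ n < p.1, SemistableSq Θ M (p.2 n) (p.2 (n + 1))) ∧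
  (∀ n, n + 1 < p.1 →
    slopeV Θ (sqDim (p.2 (n + 1)) (p.2 (n + 2))) < slopeV Θ (sqDim (p.2 n) (p.2 (n + 1))))

open Module

abbrev SubT (k : Type*) [Field k] {I : Type*} (d : I → ℕ) :=
  ∀ i : I, Submodule k (Fin (d i) → k)

section HNwork

variable {a : I → I → ℕ} {d : I → ℕ} (Θ : I → ℚ)
variable (M : ∀ i j : I, Fin (a i j) → ((Fin (d i) → k) →ₗ[k] (Fin (d j) → k)))

set_option linter.unusedSectionVars false

noncomputable def Tdim (U : SubT k d) : ℕ := ∑ i, finrank k (U i)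

noncomputable def thv (U : SubT k d) : ℚ := ∑ i, Θ i * (finrank k (U i) : ℚ)

noncomputable def mu (W W' : SubT k d) : ℚ :=
  (thv Θ W' - thv Θ W) / ((Tdim W' : ℚ) - (Tdim W : ℚ))

variable {Θ M}

lemma Tdim_mono {U V : SubT k d} (h : ∀ i, U i ≤ V i) : Tdim U ≤ Tdim V :=
  Finset.sum_le_sum fun i _ => Submodule.finrank_mono (h i)

lemma Tdim_lt {U V : SubT k d} (h : ∀ i, U i ≤ V i) (hne : U ≠ V) : Tdim U < Tdim V := by
  obtain ⟨i0, hi0⟩ : ∃ i, U i ≠ V i := by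
    by_contra hc; push_neg at hc; exact hne (funext hc)
  exact Finset.sum_lt_sum (fun i _ => Submodule.finrank_mono (h i))
    ⟨i0, Finset.mem_univ _, Submodule.finrank_lt_finrank_of_lt (lt_of_le_of_ne (h i0) hi0)⟩

lemma eq_of_le_Tdim {U V : SubT k d} (h : ∀ i, U i ≤ V i) (hT : Tdim V ≤ Tdim U) : U = V := by
  by_contra hne
  exact absurd hT (not_le.mpr (Tdim_lt h hne))

lemma Tq_pos {U V : SubT k d} (h : ∀ i, U i ≤ V i) (hne : U ≠ V) :
    (0 : ℚ) < (Tdim V : ℚ) - (Tdim U : ℚ) := by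
  have := Tdim_lt h hne
  have : (Tdim U : ℚ) < (Tdim V : ℚ) := by exact_mod_cast this
  linarith

lemma slopeV_eq {W W' : SubT k d} (h : ∀ i, W i ≤ W' i) :
    slopeV Θ (sqDim W W') = mu Θ W W' := by
  have h1 : ∀ i, ((sqDim W W' i : ℚ)) = (finrank k (W' i) : ℚ) - (finrank k (W i) : ℚ) :=
    fun i => Nat.cast_sub (Submodule.finrank_mono (h i))
  simp only [slopeV, mu, thv, Tdim, h1, mul_sub, Finset.sum_sub_distrib, Nat.cast_sum]

lemma sqDim_ne_zero {W W' : SubT k d} (h : ∀ i, W i ≤ W' i) (hne : W ≠ W') :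
    sqDim W W' ≠ 0 := by
  obtain ⟨i0, hi0⟩ : ∃ i, W i ≠ W' i := by
    by_contra hc; push_neg at hc; exact hne (funext hc)
  intro hz
  have h0 : sqDim W W' i0 = 0 := congrFun hz i0
  have : finrank k (W i0) < finrank k (W' i0) :=
    Submodule.finrank_lt_finrank_of_lt (lt_of_le_of_ne (h i0) hi0)
  simp only [sqDim] at h0
  omega

lemma sqDim_self (W : SubT k d) : sqDim W W = 0 := funext fun i => Nat.sub_self _

lemma mu_num {W U : SubT k d} (h : ∀ i, W i ≤ U i) (hne : W ≠ U) :
    thv Θ U - thv Θ W = mu Θ W U * ((Tdim U : ℚ) - (Tdim W : ℚ)) :=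
  (div_mul_cancel₀ _ (ne_of_gt (Tq_pos h hne))).symm

lemma mu_le_iff {W U : SubT k d} (h : ∀ i, W i ≤ U i) (hne : W ≠ U) {c : ℚ} :
    mu Θ W U ≤ c ↔ thv Θ U - thv Θ W ≤ c * ((Tdim U : ℚ) - (Tdim W : ℚ)) :=
  div_le_iff₀ (Tq_pos h hne)

lemma mu_lt_iff {W U : SubT k d} (h : ∀ i, W i ≤ U i) (hne : W ≠ U) {c : ℚ} :
    mu Θ W U < c ↔ thv Θ U - thv Θ W < c * ((Tdim U : ℚ) - (Tdim W : ℚ)) :=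
  div_lt_iff₀ (Tq_pos h hne)

lemma le_mu_iff {W U : SubT k d} (h : ∀ i, W i ≤ U i) (hne : W ≠ U) {c : ℚ} :
    c ≤ mu Θ W U ↔ c * ((Tdim U : ℚ) - (Tdim W : ℚ)) ≤ thv Θ U - thv Θ W :=
  le_div_iff₀ (Tq_pos h hne)

lemma thv_sup_inf (U V : SubT k d) :
    thv Θ (fun i => U i ⊔ V i) + thv Θ (fun i => U i ⊓ V i) = thv Θ U + thv Θ V := by
  simp only [thv, ← Finset.sum_add_distrib]
  refine Finset.sum_congr rfl fun i _ => ?_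
  have h : (finrank k ↥(U i ⊔ V i) : ℚ) + (finrank k ↥(U i ⊓ V i) : ℚ)
      = (finrank k (U i) : ℚ) + (finrank k (V i) : ℚ) := by
    exact_mod_cast congrArg (Nat.cast (R := ℚ)) (Submodule.finrank_sup_add_finrank_inf_eq (U i) (V i))
  linear_combination Θ i * h

lemma Tq_sup_inf (U V : SubT k d) :
    ((Tdim (fun i => U i ⊔ V i) : ℚ)) + (Tdim (fun i => U i ⊓ V i) : ℚ)
      = (Tdim U : ℚ) + (Tdim V : ℚ) := by
  have : Tdim (fun i => U i ⊔ V i) + Tdim (fun i => U i ⊓ V i) = Tdim U + Tdim V := by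
    simp only [Tdim, ← Finset.sum_add_distrib]
    exact Finset.sum_congr rfl fun i _ => Submodule.finrank_sup_add_finrank_inf_eq (U i) (V i)
  exact_mod_cast this

lemma isSubrep_sup {U V : SubT k d} (hU : IsSubrep M U) (hV : IsSubrep M V) :
    IsSubrep M (fun i => U i ⊔ V i) := by
  intro i j α
  rw [Submodule.map_sup]
  exact sup_le_sup (hU i j α) (hV i j α)

lemma isSubrep_inf {U V : SubT k d} (hU : IsSubrep M U) (hV : IsSubrep M V) :
    IsSubrep M (fun i => U i ⊓ V i) := by
  intro i j α
  exact le_inf (le_trans (Submodule.map_mono inf_le_left) (hU i j α))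
    (le_trans (Submodule.map_mono inf_le_right) (hV i j α))

lemma isSubrep_top : IsSubrep M (fun _ => (⊤ : Submodule k _)) := fun _ _ _ => le_top

lemma isSubrep_bot : IsSubrep M (fun _ => (⊥ : Submodule k _)) := by
  intro i j α
  rw [Submodule.map_bot]

lemma finrank_le_d (i : I) (U : Submodule k (Fin (d i) → k)) : finrank k U ≤ d i := by
  have := Submodule.finrank_le U
  simpa [Module.finrank_pi] using this

lemma exists_max_on {α β : Type*} [LinearOrder β] {s : Set α} (hs : s.Nonempty)
    (f : α → β) (hf : (f '' s).Finite) : ∃ x ∈ s, ∀ y ∈ s, f y ≤ f x := by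
  obtain ⟨m, hm, hmax'⟩ := hf.exists_maximal (hs.image f)
  have hmax : ∀ b ∈ f '' s, m ≤ b → m = b := fun b hb h => le_antisymm h (hmax' hb h)
  obtain ⟨x, hx, rfl⟩ := hm
  refine ⟨x, hx, fun y hy => ?_⟩
  rcases le_total (f y) (f x) with h | h
  · exact h
  · exact (hmax (f y) (Set.mem_image_of_mem f hy) h).ge

variable (Θ M) in
def NextSpec (W U : SubT k d) : Prop :=
  IsSubrep M U ∧ (∀ i, W i ≤ U i) ∧ W ≠ U ∧
  (∀ V : SubT k d, IsSubrep M V → (∀ i, W i ≤ V i) → W ≠ V → mu Θ W V ≤ mu Θ W U) ∧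
  (∀ V : SubT k d, IsSubrep M V → (∀ i, W i ≤ V i) → W ≠ V → mu Θ W U ≤ mu Θ W V →
    Tdim V ≤ Tdim U)

lemma nextSpec_exists {W : SubT k d} (hne : ∃ i0, W i0 ≠ ⊤) :
    ∃ U : SubT k d, NextSpec Θ M W U := by
  obtain ⟨i0, hi0⟩ := hne
  set C : Set (SubT k d) := {U | IsSubrep M U ∧ (∀ i, W i ≤ U i) ∧ W ≠ U} with hCdef
  have htopC : (fun _ => ⊤ : SubT k d) ∈ C := by
    refine ⟨isSubrep_top, fun i => le_top, fun h => hi0 ?_⟩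
    rw [congrFun h i0]
  have hCne : C.Nonempty := ⟨_, htopC⟩
  -- finiteness of slope values
  set g : (I → ℕ) → ℚ := fun n =>
    ((∑ i, Θ i * (n i : ℚ)) - thv Θ W) / ((∑ i, (n i : ℚ)) - (Tdim W : ℚ)) with hgdef
  have hmu : ∀ U : SubT k d, mu Θ W U = g (fun i => finrank k (U i)) := by
    intro U
    simp [mu, g, thv, Tdim, Nat.cast_sum]
  have hD : (Set.range (fun (v : ∀ i, Fin (d i + 1)) (i : I) => (v i : ℕ))).Finite :=
    Set.finite_range _
  have himg : ((fun U => mu Θ W U) '' C).Finite := by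
    refine Set.Finite.subset (hD.image g) ?_
    rintro x ⟨U, hU, rfl⟩
    refine ⟨fun i => finrank k (U i), ⟨fun i => ⟨finrank k (U i), ?_⟩, rfl⟩, (hmu U).symm⟩
    exact Nat.lt_succ_of_le (finrank_le_d i (U i))
  obtain ⟨U0, hU0C, hmax0⟩ := exists_max_on hCne (fun U => mu Θ W U) himg
  set C' : Set (SubT k d) := {U | U ∈ C ∧ mu Θ W U0 ≤ mu Θ W U} with hC'def
  have hC'ne : C'.Nonempty := ⟨U0, hU0C, le_rfl⟩
  have hTfin : (Tdim '' C').Finite := by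
    refine Set.Finite.subset (Set.finite_Iic (Tdim (fun _ => ⊤ : SubT k d))) ?_
    rintro x ⟨U, _, rfl⟩
    exact Tdim_mono fun i => le_top
  obtain ⟨U, ⟨hUC, hUge⟩, hTmax⟩ := exists_max_on hC'ne Tdim hTfin
  have hUeq : mu Θ W U = mu Θ W U0 := le_antisymm (hmax0 U hUC) hUge
  refine ⟨U, hUC.1, hUC.2.1, hUC.2.2, ?_, ?_⟩
  · intro V hV h1 h2
    exact (hmax0 V ⟨hV, h1, h2⟩).trans hUeq.ge
  · intro V hV h1 h2 hmuV
    exact hTmax _ ⟨⟨hV, h1, h2⟩, hUeq.ge.trans hmuV⟩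

variable (Θ M) in
noncomputable def nextF (W : SubT k d) : SubT k d :=
  if h : ∃ i0, W i0 ≠ ⊤ then Classical.choose (nextSpec_exists (Θ := Θ) (M := M) h)
  else fun _ => ⊤

lemma nextF_spec {W : SubT k d} (h : ∃ i0, W i0 ≠ ⊤) :
    NextSpec Θ M W (nextF Θ M W) := by
  rw [nextF, dif_pos h]
  exact Classical.choose_spec _

lemma nextF_top {W : SubT k d} (h : ∀ i, W i = ⊤) : nextF Θ M W = W := by
  rw [nextF, dif_neg]
  · exact funext fun i => (h i).symm
  · push_neg
    exact h

variable (Θ M) in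
noncomputable def GF : ℕ → SubT k d
  | 0 => fun _ => ⊥
  | (n + 1) => nextF Θ M (GF n)

lemma GF_subrep (n : ℕ) : IsSubrep M (GF Θ M n) := by
  induction n with
  | zero => rw [GF]; exact isSubrep_bot
  | succ n ih =>
    rw [GF]
    by_cases h : ∃ i0, GF Θ M n i0 ≠ ⊤
    · exact (nextF_spec h).1
    · push_neg at h
      rw [nextF_top h]
      exact ih

lemma GF_succ (n : ℕ) : GF Θ M (n + 1) = nextF Θ M (GF Θ M n) := by rw [GF]

lemma GF_spec_of {n : ℕ} (hne : ∃ i0, GF Θ M n i0 ≠ ⊤) :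
    NextSpec Θ M (GF Θ M n) (GF Θ M (n + 1)) := by
  rw [GF_succ]
  exact nextF_spec hne

lemma GF_top_succ {n : ℕ} (h : ∀ i, GF Θ M n i = ⊤) : GF Θ M (n + 1) = GF Θ M n := by
  rw [GF_succ]
  exact nextF_top h

lemma GF_exists_top : ∃ n, ∀ i, GF Θ M n i = ⊤ := by
  have claim : ∀ n, (∀ i, GF Θ M n i = ⊤) ∨ n ≤ Tdim (GF Θ M n) := by
    intro n
    induction n with
    | zero => exact Or.inr (Nat.zero_le _)
    | succ n ih =>
      by_cases htop : ∀ i, GF Θ M n i = ⊤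
      · left
        intro i
        rw [GF_top_succ htop]
        exact htop i
      · right
        push_neg at htop
        have spec := GF_spec_of (Θ := Θ) (M := M) htop
        have hlt : Tdim (GF Θ M n) < Tdim (GF Θ M (n + 1)) := Tdim_lt spec.2.1 spec.2.2.1
        rcases ih with h | h
        · exact absurd h (by push_neg; exact htop)
        · omega
  rcases claim (Tdim (fun _ => ⊤ : SubT k d) + 1) with h | h
  · exact ⟨_, h⟩
  · have := Tdim_mono (U := GF Θ M (Tdim (fun _ => ⊤ : SubT k d) + 1))
      (V := fun _ => ⊤) (fun i => le_top)
    omega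

lemma GF_strict_decrease {n : ℕ} (hn : ∃ i, GF Θ M n i ≠ ⊤)
    (hn1 : ∃ i, GF Θ M (n + 1) i ≠ ⊤) :
    mu Θ (GF Θ M (n + 1)) (GF Θ M (n + 2)) < mu Θ (GF Θ M n) (GF Θ M (n + 1)) := by
  have spec1 := GF_spec_of (Θ := Θ) (M := M) hn
  have spec2 : NextSpec Θ M (GF Θ M (n + 1)) (GF Θ M (n + 2)) := by
    have h := GF_spec_of (Θ := Θ) (M := M) hn1
    rwa [show n + 1 + 1 = n + 2 by omega] at h
  by_contra hle
  push_neg at hle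
  have h01 := spec1.2.1
  have hne01 := spec1.2.2.1
  have h12 := spec2.2.1
  have hne12 := spec2.2.2.1
  have h02 : ∀ i, GF Θ M n i ≤ GF Θ M (n + 2) i := fun i => (h01 i).trans (h12 i)
  have t01 := Tdim_lt h01 hne01
  have t12 := Tdim_lt h12 hne12
  have hne02 : GF Θ M n ≠ GF Θ M (n + 2) := by
    intro heq
    rw [heq] at t01
    omega
  have e1 := mu_num (Θ := Θ) h01 hne01
  have e2 := mu_num (Θ := Θ) h12 hne12
  have hT12 := Tq_pos h12 hne12
  have key : mu Θ (GF Θ M n) (GF Θ M (n + 1)) ≤ mu Θ (GF Θ M n) (GF Θ M (n + 2)) := by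
    rw [le_mu_iff h02 hne02]
    nlinarith [e1, e2, hT12, hle]
  have := spec1.2.2.2.2 (GF Θ M (n + 2)) (GF_subrep (n + 2)) h02 hne02 key
  omega

lemma filt_mono {p : ℕ × (ℕ → SubT k d)} (hp : IsHNFiltration Θ M p)
    {m n : ℕ} (hmn : m ≤ n) (hn : n ≤ p.1) : ∀ i, p.2 m i ≤ p.2 n i := by
  induction n, hmn using Nat.le_induction with
  | base => exact fun i => le_rfl
  | succ n hmn ih =>
    intro i
    exact (ih (by omega) i).trans (hp.2.2.2.2.1 n (by omega) i)

lemma mustep_slopeV {p : ℕ × (ℕ → SubT k d)} (hp : IsHNFiltration Θ M p)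
    {t : ℕ} (ht : t < p.1) :
    slopeV Θ (sqDim (p.2 t) (p.2 (t + 1))) = mu Θ (p.2 t) (p.2 (t + 1)) :=
  slopeV_eq (hp.2.2.2.2.1 t ht)

lemma mustep_lt {p : ℕ × (ℕ → SubT k d)} (hp : IsHNFiltration Θ M p)
    {u v : ℕ} (huv : u < v) (hv : v + 1 ≤ p.1) :
    mu Θ (p.2 v) (p.2 (v + 1)) < mu Θ (p.2 u) (p.2 (u + 1)) := by
  have huv' : u + 1 ≤ v := huv
  induction v, huv' using Nat.le_induction with
  | base =>
    have h8 := hp.2.2.2.2.2.2.2 u (by omega)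
    rwa [mustep_slopeV hp (by omega), mustep_slopeV hp (by omega)] at h8
  | succ v hv' ih =>
    have h8 := hp.2.2.2.2.2.2.2 v (by omega)
    rw [mustep_slopeV hp (by omega), mustep_slopeV hp (by omega)] at h8
    exact h8.trans (ih (by omega) (by omega))

lemma dominance {p : ℕ × (ℕ → SubT k d)} (hp : IsHNFiltration Θ M p)
    {n : ℕ} (hn : n < p.1) :
    ∀ j, 1 ≤ j → n + j ≤ p.1 → ∀ V : SubT k d, IsSubrep M V →
      (∀ i, p.2 n i ≤ V i) → p.2 n ≠ V → (∀ i, V i ≤ p.2 (n + j) i) →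
      mu Θ (p.2 n) V ≤ mu Θ (p.2 n) (p.2 (n + 1)) ∧
        (mu Θ (p.2 n) V = mu Θ (p.2 n) (p.2 (n + 1)) → ∀ i, V i ≤ p.2 (n + 1) i) := by
  intro j hj
  induction j, hj using Nat.le_induction with
  | base =>
    intro _ V hV h1 h2 h3
    have hss := hp.2.2.2.2.2.2.1 n hn V hV h1 h3 (sqDim_ne_zero h1 h2)
    rw [slopeV_eq h1, mustep_slopeV hp hn] at hss
    exact ⟨hss, fun _ => h3⟩
  | succ j hj ih =>
    intro hle V hV h1 h2 h3
    by_cases hVF : ∀ i, V i ≤ p.2 (n + j) i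
    · exact ih (by omega) V hV h1 h2 hVF
    · push_neg at hVF
      obtain ⟨i0, hi0⟩ := hVF
      set F := p.2 (n + j) with hF
      set S : SubT k d := fun i => V i ⊔ F i with hSdef
      set V' : SubT k d := fun i => V i ⊓ F i with hV'def
      have hSsub : IsSubrep M S := isSubrep_sup hV (hp.2.2.2.1 (n + j))
      have hV'sub : IsSubrep M V' := isSubrep_inf hV (hp.2.2.2.1 (n + j))
      have hFS : ∀ i, F i ≤ S i := fun i => le_sup_right
      have hFSne : F ≠ S := by
        intro h
        exact hi0 (by rw [show F i0 = S i0 from congrFun h i0]; exact le_sup_left)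
      have hSF1 : ∀ i, S i ≤ p.2 (n + j + 1) i :=
        fun i => sup_le (h3 i) (hp.2.2.2.2.1 (n + j) (by omega) i)
      have hsemi := hp.2.2.2.2.2.2.1 (n + j) (by omega) S hSsub hFS hSF1
        (sqDim_ne_zero hFS hFSne)
      rw [slopeV_eq hFS, mustep_slopeV hp (by omega : n + j < p.1)] at hsemi
      have hstep : mu Θ (p.2 (n + j)) (p.2 (n + j + 1)) < mu Θ (p.2 n) (p.2 (n + 1)) :=
        mustep_lt hp (by omega) (by omega)
      have hFSmu : mu Θ F S < mu Θ (p.2 n) (p.2 (n + 1)) := lt_of_le_of_lt hsemi hstep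
      set c := mu Θ (p.2 n) (p.2 (n + 1)) with hc
      have hV'le : ∀ i, V' i ≤ V i := fun i => inf_le_left
      have hV'ne : V' ≠ V := by
        intro h
        exact hi0 (by rw [show V i0 = V' i0 from (congrFun h i0).symm]; exact inf_le_right)
      have hnV' : ∀ i, p.2 n i ≤ V' i :=
        fun i => le_inf (h1 i) (filt_mono hp (by omega) (by omega) i)
      have eth := thv_sup_inf (Θ := Θ) V F
      have eT := Tq_sup_inf V F
      rw [← hSdef, ← hV'def] at eth eT
      have hq : thv Θ S - thv Θ F < c * ((Tdim S : ℚ) - (Tdim F : ℚ)) :=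
        (mu_lt_iff hFS hFSne).mp hFSmu
      have eprod : c * ((Tdim S : ℚ) - (Tdim F : ℚ))
          = c * ((Tdim V : ℚ) - (Tdim V' : ℚ)) := by linear_combination c * eT
      have hlt : mu Θ (p.2 n) V < c := by
        by_cases heq : V' = p.2 n
        · rw [mu_lt_iff h1 h2]
          have e1 : thv Θ V' = thv Θ (p.2 n) := by rw [heq]
          have e2 : (Tdim V' : ℚ) = (Tdim (p.2 n) : ℚ) := by rw [heq]
          have eprod3 : c * ((Tdim V : ℚ) - (Tdim V' : ℚ))
              = c * ((Tdim V : ℚ) - (Tdim (p.2 n) : ℚ)) := by rw [e2]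
          linarith only [hq, eth, e1, eprod, eprod3]
        · have ihres := ih (by omega) V' hV'sub hnV' (Ne.symm heq) (fun i => inf_le_right)
          have hp' : thv Θ V' - thv Θ (p.2 n)
              ≤ c * ((Tdim V' : ℚ) - (Tdim (p.2 n) : ℚ)) :=
            (mu_le_iff hnV' (Ne.symm heq)).mp ihres.1
          rw [mu_lt_iff h1 h2]
          have eprod2 : c * ((Tdim V' : ℚ) - (Tdim (p.2 n) : ℚ))
              + c * ((Tdim V : ℚ) - (Tdim V' : ℚ))
              = c * ((Tdim V : ℚ) - (Tdim (p.2 n) : ℚ)) := by ring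
          linarith only [hq, hp', eth, eprod, eprod2]
      exact ⟨hlt.le, fun h => absurd h (ne_of_lt hlt)⟩

end HNwork

theorem harder_narasimhan_filtration_exists_unique
    (a : I → I → ℕ) (d : I → ℕ) (Θ : I → ℚ)
    (M : ∀ i j : I, Fin (a i j) → ((Fin (d i) → k) →ₗ[k] (Fin (d j) → k))) :
    ∃! p : ℕ × (ℕ → ∀ i : I, Submodule k (Fin (d i) → k)), IsHNFiltration Θ M p := by
  have hex := GF_exists_top (Θ := Θ) (M := M)
  set s := Nat.find hex with hs
  have hstop : ∀ i, GF Θ M s i = ⊤ := Nat.find_spec hex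
  have hlt : ∀ n < s, ∃ i, GF Θ M n i ≠ ⊤ := by
    intro n hn
    have := Nat.find_min hex hn
    push_neg at this
    exact this
  have hconst_top : ∀ n, s ≤ n → ∀ i, GF Θ M n i = ⊤ := by
    intro n hn
    induction n, hn using Nat.le_induction with
    | base => exact hstop
    | succ n hn ih =>
      intro i
      rw [GF_top_succ ih]
      exact ih i
  have hGFs : ∀ n, n ≥ s → GF Θ M n = GF Θ M s :=
    fun n hn => funext fun i => by rw [hconst_top n hn i, hstop i]
  have hHN : IsHNFiltration Θ M (s, GF Θ M) := by
    refine ⟨fun i => by show GF Θ M 0 i = ⊥; rw [GF], hstop, hGFs, GF_subrep, ?_, ?_, ?_, ?_⟩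
    · intro n hn
      exact (GF_spec_of (hlt n hn)).2.1
    · intro n hn
      exact (GF_spec_of (hlt n hn)).2.2.1
    · intro n hn V hV h1 h3 hsq
      have spec := GF_spec_of (hlt n hn)
      have hne : GF Θ M n ≠ V := by
        intro h
        exact hsq (h ▸ sqDim_self _)
      rw [slopeV_eq h1, slopeV_eq spec.2.1]
      exact spec.2.2.2.1 V hV h1 hne
    · intro n hn
      have h1 := hlt n (by omega)
      have h2 := hlt (n + 1) (by omega)
      have hdec := GF_strict_decrease h1 h2
      have spec2le : ∀ i, GF Θ M (n + 1) i ≤ GF Θ M (n + 2) i := by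
        have := (GF_spec_of (Θ := Θ) (M := M) h2).2.1
        rwa [show n + 1 + 1 = n + 2 by omega] at this
      rw [slopeV_eq spec2le, slopeV_eq (GF_spec_of h1).2.1]
      exact hdec
  refine ⟨(s, GF Θ M), hHN, ?_⟩
  rintro ⟨sq, Fq⟩ hq
  have hq1 : ∀ i, Fq 0 i = ⊥ := hq.1
  have hq2 : ∀ i, Fq sq i = ⊤ := hq.2.1
  have hq3 : ∀ n, n ≥ sq → Fq n = Fq sq := hq.2.2.1
  have hq4 : ∀ n, IsSubrep M (Fq n) := hq.2.2.2.1
  have hq5 : ∀ n, n < sq → ∀ i, Fq n i ≤ Fq (n + 1) i := hq.2.2.2.2.1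
  have hq6 : ∀ n, n < sq → Fq n ≠ Fq (n + 1) := hq.2.2.2.2.2.1
  have hF : ∀ n, Fq n = GF Θ M n := by
    intro n
    induction n with
    | zero =>
      funext i
      rw [hq1 i]
      show _ = GF Θ M 0 i
      rw [GF]
    | succ n ih =>
      by_cases htop : ∀ i, Fq n i = ⊤
      · have hns : sq ≤ n := by
          by_contra hns
          push_neg at hns
          exact hq6 n hns
            (funext fun i => le_antisymm (hq5 n hns i) (by rw [htop i]; exact le_top))
        have hconst : Fq (n + 1) = Fq sq := hq3 (n + 1) (by omega)
        have hq1top : ∀ i, Fq (n + 1) i = ⊤ := fun i => by rw [hconst]; exact hq2 i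
        have hGtop : ∀ i, GF Θ M n i = ⊤ := fun i => by rw [← ih]; exact htop i
        exact funext fun i => by rw [hq1top i, GF_top_succ hGtop, hGtop i]
      · push_neg at htop
        have hns : n < sq := by
          by_contra h
          push_neg at h
          obtain ⟨i, hi⟩ := htop
          exact hi (by rw [hq3 n h]; exact hq2 i)
        have hGne : ∃ i, GF Θ M n i ≠ ⊤ := by
          obtain ⟨i, hi⟩ := htop
          exact ⟨i, by rw [← ih]; exact hi⟩
        have spec := GF_spec_of (Θ := Θ) (M := M) hGne
        have hdom : mu Θ (Fq n) (GF Θ M (n + 1)) ≤ mu Θ (Fq n) (Fq (n + 1)) ∧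
            (mu Θ (Fq n) (GF Θ M (n + 1)) = mu Θ (Fq n) (Fq (n + 1)) →
              ∀ i, GF Θ M (n + 1) i ≤ Fq (n + 1) i) :=
          dominance hq hns (sq - n) (by omega) (by omega) (GF Θ M (n + 1))
            (GF_subrep (n + 1))
            (fun i => by show Fq n i ≤ _; rw [ih]; exact spec.2.1 i)
            (by show Fq n ≠ _; rw [ih]; exact spec.2.2.1)
            (fun i => by
              show GF Θ M (n + 1) i ≤ Fq (n + (sq - n)) i
              rw [show n + (sq - n) = sq by omega, hq2 i]
              exact le_top)
        rw [ih] at hdom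
        have hstep_le : ∀ i, GF Θ M n i ≤ Fq (n + 1) i := fun i => by
          rw [← ih]
          exact hq5 n hns i
        have hstep_ne : GF Θ M n ≠ Fq (n + 1) := by
          rw [← ih]
          exact hq6 n hns
        have hmax := spec.2.2.2.1 (Fq (n + 1)) (hq4 (n + 1)) hstep_le hstep_ne
        have heqmu : mu Θ (GF Θ M n) (GF Θ M (n + 1)) = mu Θ (GF Θ M n) (Fq (n + 1)) :=
          le_antisymm hdom.1 hmax
        have hle' : ∀ i, GF Θ M (n + 1) i ≤ Fq (n + 1) i := hdom.2 heqmu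
        have hT := spec.2.2.2.2 (Fq (n + 1)) (hq4 (n + 1)) hstep_le hstep_ne heqmu.le
        exact (eq_of_le_Tdim hle' hT).symm
  have h1 : s ≤ sq := Nat.find_min' hex (fun i => by rw [← hF sq]; exact hq2 i)
  have h2 : sq ≤ s := by
    by_contra h
    push_neg at h
    apply hq6 s h
    rw [hF s, hF (s + 1), GF_top_succ hstop]
  simp only [Prod.mk.injEq]
  exact ⟨le_antisymm h2 h1, funext hF⟩
end

section
/- Let B₁ = ℚ[[x,y]] with Poisson bracket {x,y} = xy, and define Poisson automorphisms T_{a,b} for (a,b) ∈ ℕ² \ {0} by T_{a,b}(x) = x(1+x^a y^b)^{-b}, T_{a,b}(y) = y(1+x^a y^b)^{a}. Then T_{1,0} ∘ T_{0,1} = T_{0,1} ∘ T_{1,1} ∘ T_{1,0}. -/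
/- STATEMENT 18: Let B₁ = ℚ[[x,y]] with Poisson bracket {x,y} = xy, and define the Poisson
automorphisms T_{a,b} by T_{a,b}(x) = x(1+x^a y^b)^{-b}, T_{a,b}(y) = y(1+x^a y^b)^{a},
extended continuously. Then T_{1,0} ∘ T_{0,1} = T_{0,1} ∘ T_{1,1} ∘ T_{1,0}. -/

open scoped Classical

noncomputable section

abbrev B₁ := MvPowerSeries (Fin 2) ℚ

/-- The monomial `x^a y^b`. -/
def w (a b : ℕ) : B₁ :=
  MvPowerSeries.monomial (Finsupp.single (0 : Fin 2) a + Finsupp.single (1 : Fin 2) b) 1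

/-- Integer powers `f^n` of a power series with constant term 1. -/
def zpowOf (f : B₁) (n : ℤ) : B₁ :=
  if 0 ≤ n then f ^ n.toNat else (MvPowerSeries.invOfUnit f 1) ^ (-n).toNat

/-- `T_{a,b}(x) = x · (1 + x^a y^b)^{-b}`. -/
def Xab (a b : ℕ) : B₁ :=
  MvPowerSeries.monomial (Finsupp.single (0 : Fin 2) 1) 1 * zpowOf (1 + w a b) (-(b : ℤ))

/-- `T_{a,b}(y) = y · (1 + x^a y^b)^{a}`. -/
def Yab (a b : ℕ) : B₁ :=
  MvPowerSeries.monomial (Finsupp.single (1 : Fin 2) 1) 1 * zpowOf (1 + w a b) (a : ℤ)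

/-- The continuous algebra endomorphism `T_{a,b}` of `B₁ = ℚ[[x,y]]` with
`T_{a,b}(x) = x(1+x^a y^b)^{-b}` and `T_{a,b}(y) = y(1+x^a y^b)^{a}`: on a series it is
given by substituting these values, coefficientwise by a (finite) sum over all
monomials. -/
def Tab (a b : ℕ) (f : B₁) : B₁ :=
  fun c => ∑ᶠ e : Fin 2 →₀ ℕ,
    (MvPowerSeries.coeff e f) * MvPowerSeries.coeff c ((Xab a b) ^ (e 0) * (Yab a b) ^ (e 1))


section Dev
open Finsupp

def deg (e : Fin 2 →₀ ℕ) : ℕ := e 0 + e 1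

lemma deg_add (a b : Fin 2 →₀ ℕ) : deg (a + b) = deg a + deg b := by
  simp [deg]; ring

lemma one_le_deg {e : Fin 2 →₀ ℕ} (h : e ≠ 0) : 1 ≤ deg e := by
  by_contra hc
  push_neg at hc
  simp only [deg, Nat.lt_one_iff, Nat.add_eq_zero] at hc
  apply h
  ext i
  fin_cases i <;> simp [hc.1, hc.2]

-- vanishing lemma
lemma coeff_pow_eq_zero {P : B₁} (hP : MvPowerSeries.constantCoeff P = 0) :
    ∀ m (d : Fin 2 →₀ ℕ), deg d < m → MvPowerSeries.coeff d (P ^ m) = 0 := by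
  intro m
  induction m with
  | zero => intro d h; omega
  | succ n ih =>
    intro d h
    rw [pow_succ, mul_comm, MvPowerSeries.coeff_mul]
    apply Finset.sum_eq_zero
    rintro ⟨d1, d2⟩ hd
    rw [Finset.HasAntidiagonal.mem_antidiagonal] at hd
    by_cases h1 : d1 = 0
    · subst h1
      simp only [MvPowerSeries.coeff_zero_eq_constantCoeff] at *
      rw [hP, zero_mul]
    · have : deg d1 + deg d2 = deg d := by rw [← deg_add, hd]
      have := one_le_deg h1
      have : deg d2 < n := by omega
      rw [ih d2 this, mul_zero]

lemma coeff_pow_mul_eq_zero {P Q : B₁} (hP : MvPowerSeries.constantCoeff P = 0)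
    (hQ : MvPowerSeries.constantCoeff Q = 0) {m n : ℕ} {d : Fin 2 →₀ ℕ}
    (h : deg d < m + n) : MvPowerSeries.coeff d (P ^ m * Q ^ n) = 0 := by
  rw [MvPowerSeries.coeff_mul]
  apply Finset.sum_eq_zero
  rintro ⟨d1, d2⟩ hd
  rw [Finset.HasAntidiagonal.mem_antidiagonal] at hd
  have hdd : deg d1 + deg d2 = deg d := by rw [← deg_add, hd]
  rcases lt_or_ge (deg d1) m with h1 | h1
  · rw [coeff_pow_eq_zero hP m d1 h1, zero_mul]
  · rw [coeff_pow_eq_zero hQ n d2 (by omega), mul_zero]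

def S (P Q : B₁) (f : B₁) : B₁ :=
  fun c => ∑ᶠ e : Fin 2 →₀ ℕ,
    (MvPowerSeries.coeff e f) * MvPowerSeries.coeff c (P ^ (e 0) * Q ^ (e 1))

def bnd (c : Fin 2 →₀ ℕ) : Fin 2 →₀ ℕ :=
  Finsupp.single 0 (deg c) + Finsupp.single 1 (deg c)

lemma le_bnd {e c : Fin 2 →₀ ℕ} (h : deg e ≤ deg c) : e ≤ bnd c := by
  rw [Finsupp.le_iff]
  intro i _
  have h0 : (bnd c) 0 = deg c := by simp [bnd]
  have h1 : (bnd c) 1 = deg c := by simp [bnd]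
  fin_cases i
  · show e 0 ≤ (bnd c) 0
    rw [h0]; simp only [deg] at h ⊢; omega
  · show e 1 ≤ (bnd c) 1
    rw [h1]; simp only [deg] at h ⊢; omega

variable {P Q : B₁} (hP : MvPowerSeries.constantCoeff P = 0)
  (hQ : MvPowerSeries.constantCoeff Q = 0)

include hP hQ in
lemma S_coeff (f : B₁) {s : Finset (Fin 2 →₀ ℕ)} (c : Fin 2 →₀ ℕ) (hs : Finset.Iic (bnd c) ⊆ s) :
    MvPowerSeries.coeff c (S P Q f) =
      ∑ e ∈ s, (MvPowerSeries.coeff e f) * MvPowerSeries.coeff c (P ^ (e 0) * Q ^ (e 1)) := by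
  rw [MvPowerSeries.coeff_apply, S]
  apply finsum_eq_finset_sum_of_support_subset
  intro e he
  simp only [Function.mem_support] at he
  apply hs
  rw [Finset.mem_Iic]
  apply le_bnd
  by_contra hc
  push_neg at hc
  exact he (by rw [coeff_pow_mul_eq_zero hP hQ (by simpa [deg] using hc), mul_zero])

include hP hQ in
lemma S_add (f g : B₁) : S P Q (f + g) = S P Q f + S P Q g := by
  ext c
  rw [map_add, S_coeff hP hQ _ c (Finset.Subset.refl _), S_coeff hP hQ f c (Finset.Subset.refl _),
    S_coeff hP hQ g c (Finset.Subset.refl _), ← Finset.sum_add_distrib]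
  apply Finset.sum_congr rfl
  intro e _
  rw [map_add, add_mul]

include hP hQ in
lemma S_smul (r : ℚ) (f : B₁) : S P Q (r • f) = r • S P Q f := by
  ext c
  rw [map_smul, smul_eq_mul, S_coeff hP hQ _ c (Finset.Subset.refl _),
    S_coeff hP hQ f c (Finset.Subset.refl _), Finset.mul_sum]
  apply Finset.sum_congr rfl
  intro e _
  rw [map_smul, smul_eq_mul, mul_assoc]

lemma S_monomial (e : Fin 2 →₀ ℕ) (r : ℚ) :
    S P Q (MvPowerSeries.monomial e r) = r • (P ^ (e 0) * Q ^ (e 1)) := by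
  ext c
  rw [MvPowerSeries.coeff_apply, S]
  rw [finsum_eq_single _ e]
  · simp [MvPowerSeries.coeff_monomial_same]
  · intro e' he'
    rw [MvPowerSeries.coeff_monomial_ne he', zero_mul]

lemma S_one : S P Q 1 = 1 := by
  have h := S_monomial (P := P) (Q := Q) 0 1
  rw [MvPowerSeries.monomial_zero_one] at h
  simpa using h

lemma bnd_mono {a b : Fin 2 →₀ ℕ} (h : deg a ≤ deg b) : bnd a ≤ bnd b := by
  rw [Finsupp.le_iff]
  intro i _
  unfold bnd
  fin_cases i <;> simp <;> omega

include hP hQ in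
lemma coeff_le_of_ne_zero {m n : ℕ} {d : Fin 2 →₀ ℕ}
    (h : MvPowerSeries.coeff d (P ^ m * Q ^ n) ≠ 0) : m + n ≤ deg d := by
  by_contra hc
  push_neg at hc
  exact h (coeff_pow_mul_eq_zero hP hQ hc)

include hP hQ in
lemma S_mul (f g : B₁) : S P Q (f * g) = S P Q f * S P Q g := by
  ext c
  set s : Finset (Fin 2 →₀ ℕ) := Finset.Iic (bnd c) with hs
  -- RHS
  have hrhs : MvPowerSeries.coeff c (S P Q f * S P Q g) =
      ∑ p ∈ s ×ˢ s, MvPowerSeries.coeff p.1 f * MvPowerSeries.coeff p.2 g *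
        MvPowerSeries.coeff c (P ^ (p.1 0 + p.2 0) * Q ^ (p.1 1 + p.2 1)) := by
    rw [MvPowerSeries.coeff_mul]
    have step : ∀ q ∈ Finset.HasAntidiagonal.antidiagonal c,
        MvPowerSeries.coeff q.1 (S P Q f) * MvPowerSeries.coeff q.2 (S P Q g) =
        ∑ p ∈ s ×ˢ s, (MvPowerSeries.coeff p.1 f * MvPowerSeries.coeff p.2 g) *
          (MvPowerSeries.coeff q.1 (P ^ (p.1 0) * Q ^ (p.1 1)) *
            MvPowerSeries.coeff q.2 (P ^ (p.2 0) * Q ^ (p.2 1))) := by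
      rintro ⟨c1, c2⟩ hq
      rw [Finset.HasAntidiagonal.mem_antidiagonal] at hq
      have hc1 : deg c1 ≤ deg c := by rw [← hq, deg_add]; exact Nat.le_add_right _ _
      have hc2 : deg c2 ≤ deg c := by rw [← hq, deg_add]; exact Nat.le_add_left _ _
      rw [S_coeff hP hQ f c1 (Finset.Iic_subset_Iic.2 (bnd_mono hc1)),
        S_coeff hP hQ g c2 (Finset.Iic_subset_Iic.2 (bnd_mono hc2)),
        Finset.sum_mul_sum]
      rw [Finset.sum_product]
      apply Finset.sum_congr rfl; intro u _
      apply Finset.sum_congr rfl; intro v _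
      ring
    rw [Finset.sum_congr rfl step, Finset.sum_comm]
    apply Finset.sum_congr rfl
    rintro ⟨u, v⟩ _
    rw [← Finset.mul_sum, ← MvPowerSeries.coeff_mul]
    congr 2
    rw [pow_add, pow_add]
    ring
  rw [hrhs, S_coeff hP hQ _ c (Finset.Subset.refl _)]
  -- LHS
  have hlhs : ∀ e ∈ s, MvPowerSeries.coeff e (f * g) *
      MvPowerSeries.coeff c (P ^ (e 0) * Q ^ (e 1)) =
      ∑ p ∈ Finset.HasAntidiagonal.antidiagonal e, MvPowerSeries.coeff p.1 f * MvPowerSeries.coeff p.2 g *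
        MvPowerSeries.coeff c (P ^ (p.1 0 + p.2 0) * Q ^ (p.1 1 + p.2 1)) := by
    intro e _
    rw [MvPowerSeries.coeff_mul, Finset.sum_mul]
    apply Finset.sum_congr rfl
    rintro ⟨u, v⟩ hp
    rw [Finset.HasAntidiagonal.mem_antidiagonal] at hp
    have h0 : e 0 = u 0 + v 0 := by rw [← hp]; rfl
    have h1 : e 1 = u 1 + v 1 := by rw [← hp]; rfl
    rw [h0, h1]
  rw [Finset.sum_congr rfl hlhs]
  -- reindex
  rw [← Finset.sum_biUnion]
  · apply Finset.sum_subset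
    · intro p hp
      rw [Finset.mem_biUnion] at hp
      obtain ⟨e, he, hpe⟩ := hp
      rw [Finset.HasAntidiagonal.mem_antidiagonal] at hpe
      rw [Finset.mem_Iic] at he
      rw [Finset.mem_product, Finset.mem_Iic, Finset.mem_Iic]
      constructor
      · exact le_trans (by rw [← hpe]; exact le_add_right (le_refl _)) he
      · exact le_trans (by rw [← hpe]; exact le_add_left (le_refl _)) he
    · intro p hp hnp
      by_contra hne
      have hcoeff : MvPowerSeries.coeff c (P ^ (p.1 0 + p.2 0) * Q ^ (p.1 1 + p.2 1)) ≠ 0 := by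
        intro h; exact hne (by rw [h, mul_zero])
      have hle := coeff_le_of_ne_zero hP hQ hcoeff
      have hdeg : deg (p.1 + p.2) ≤ deg c := by
        simp only [deg, Finsupp.add_apply] at hle ⊢; omega
      apply hnp
      rw [Finset.mem_biUnion]
      exact ⟨p.1 + p.2, Finset.mem_Iic.2 (le_bnd hdeg), Finset.HasAntidiagonal.mem_antidiagonal.2 rfl⟩
  · intro e1 he1 e2 he2 hne
    simp only [Finset.disjoint_left]
    intro p hp1 hp2
    rw [Finset.HasAntidiagonal.mem_antidiagonal] at hp1 hp2
    exact hne (by rw [← hp1, ← hp2])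

include hP hQ in
lemma S_pow (f : B₁) (n : ℕ) : S P Q (f ^ n) = (S P Q f) ^ n := by
  induction n with
  | zero => simpa using S_one (P := P) (Q := Q)
  | succ k ih => rw [pow_succ, pow_succ, S_mul hP hQ, ih]

include hP hQ in
lemma S_zero : S P Q 0 = 0 := by
  have h := S_smul hP hQ 0 0
  simpa using h

include hP hQ in
lemma S_sum {ι : Type*} (t : Finset ι) (g : ι → B₁) :
    S P Q (∑ i ∈ t, g i) = ∑ i ∈ t, S P Q (g i) := by
  classical
  induction t using Finset.induction_on with
  | empty => simpa using S_zero hP hQ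
  | insert _ _ hni ih =>
    rw [Finset.sum_insert hni, Finset.sum_insert hni, S_add hP hQ, ih]

include hP hQ in
lemma constantCoeff_S (f : B₁) :
    MvPowerSeries.constantCoeff (S P Q f) =
      MvPowerSeries.constantCoeff f := by
  rw [← MvPowerSeries.coeff_zero_eq_constantCoeff_apply, ← MvPowerSeries.coeff_zero_eq_constantCoeff_apply]
  rw [MvPowerSeries.coeff_apply, S, finsum_eq_single _ 0]
  · simp
  · intro e he
    have : 1 ≤ deg e := one_le_deg he
    rw [coeff_pow_mul_eq_zero hP hQ (by simp [deg] at this ⊢; omega), mul_zero]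

include hP hQ in
lemma S_congr (f g : B₁) (c : Fin 2 →₀ ℕ)
    (h : ∀ e, deg e ≤ deg c → MvPowerSeries.coeff e f = MvPowerSeries.coeff e g) :
    MvPowerSeries.coeff c (S P Q f) = MvPowerSeries.coeff c (S P Q g) := by
  rw [S_coeff hP hQ f c (Finset.Subset.refl _), S_coeff hP hQ g c (Finset.Subset.refl _)]
  apply Finset.sum_congr rfl
  intro e _
  by_cases hz : MvPowerSeries.coeff c (P ^ (e 0) * Q ^ (e 1)) = 0
  · rw [hz, mul_zero, mul_zero]
  · have := coeff_le_of_ne_zero hP hQ hz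
    rw [h e (by simpa [deg] using this)]

/-- truncation -/
def tr (s : Finset (Fin 2 →₀ ℕ)) (f : B₁) : B₁ :=
  ∑ e ∈ s, MvPowerSeries.monomial e (MvPowerSeries.coeff e f)

lemma coeff_tr (s : Finset (Fin 2 →₀ ℕ)) (f : B₁) (e : Fin 2 →₀ ℕ) :
    MvPowerSeries.coeff e (tr s f) = if e ∈ s then MvPowerSeries.coeff e f else 0 := by
  rw [tr, map_sum]
  by_cases he : e ∈ s
  · rw [if_pos he, Finset.sum_eq_single e
      (fun b _ hbe => MvPowerSeries.coeff_monomial_ne (Ne.symm hbe) _)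
      (fun h => absurd he h), MvPowerSeries.coeff_monomial_same]
  · rw [if_neg he]
    apply Finset.sum_eq_zero
    intro b hb
    have : e ≠ b := by rintro rfl; exact he hb
    exact MvPowerSeries.coeff_monomial_ne this _

include hP hQ in
lemma S_comp (P' Q' : B₁) (hP' : MvPowerSeries.constantCoeff P' = 0)
    (hQ' : MvPowerSeries.constantCoeff Q' = 0) (f : B₁) :
    S P' Q' (S P Q f) = S (S P' Q' P) (S P' Q' Q) f := by
  have hP'' : MvPowerSeries.constantCoeff (S P' Q' P) = 0 := by
    rw [constantCoeff_S hP' hQ', hP]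
  have hQ'' : MvPowerSeries.constantCoeff (S P' Q' Q) = 0 := by
    rw [constantCoeff_S hP' hQ', hQ]
  ext c
  set s : Finset (Fin 2 →₀ ℕ) := Finset.Iic (bnd c) with hsdef
  set p : B₁ := tr s f with hpdef
  have hcoeffp : ∀ e, deg e ≤ deg c → MvPowerSeries.coeff e p = MvPowerSeries.coeff e f := by
    intro e he
    rw [hpdef, coeff_tr, if_pos (Finset.mem_Iic.2 (le_bnd he))]
  have step1 : MvPowerSeries.coeff c (S P' Q' (S P Q f)) =
      MvPowerSeries.coeff c (S P' Q' (S P Q p)) := by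
    apply S_congr hP' hQ'
    intro e he
    apply S_congr hP hQ
    intro e' he'
    exact (hcoeffp e' (le_trans he' he)).symm
  have step2 : S P Q p = ∑ e ∈ s, (MvPowerSeries.coeff e f) • (P ^ (e 0) * Q ^ (e 1)) := by
    rw [hpdef, tr, S_sum hP hQ]
    apply Finset.sum_congr rfl
    intro e _
    rw [S_monomial]
  have step3 : S P' Q' (S P Q p) =
      ∑ e ∈ s, (MvPowerSeries.coeff e f) • ((S P' Q' P) ^ (e 0) * (S P' Q' Q) ^ (e 1)) := by
    rw [step2, S_sum hP' hQ']
    apply Finset.sum_congr rfl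
    intro e _
    rw [S_smul hP' hQ', S_mul hP' hQ', S_pow hP' hQ', S_pow hP' hQ']
  have step4 : S (S P' Q' P) (S P' Q' Q) p =
      ∑ e ∈ s, (MvPowerSeries.coeff e f) • ((S P' Q' P) ^ (e 0) * (S P' Q' Q) ^ (e 1)) := by
    rw [hpdef, tr, S_sum hP'' hQ'']
    apply Finset.sum_congr rfl
    intro e _
    rw [S_monomial]
  rw [step1, step3, ← step4]
  apply S_congr hP'' hQ''
  intro e he
  exact hcoeffp e he


def xS : B₁ := MvPowerSeries.monomial (Finsupp.single (0 : Fin 2) 1) 1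
def yS : B₁ := MvPowerSeries.monomial (Finsupp.single (1 : Fin 2) 1) 1

lemma w10 : w 1 0 = xS := by simp [w, xS]
lemma w01 : w 0 1 = yS := by simp [w, yS]
lemma w11 : w 1 1 = xS * yS := by
  rw [w, xS, yS, MvPowerSeries.monomial_mul_monomial, one_mul]

lemma ccx : MvPowerSeries.constantCoeff xS = 0 := by
  rw [← MvPowerSeries.coeff_zero_eq_constantCoeff_apply, xS]
  apply MvPowerSeries.coeff_monomial_ne
  intro h
  simpa using congrFun (congrArg (fun (e : Fin 2 →₀ ℕ) => (e : Fin 2 → ℕ)) h) 0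

lemma ccy : MvPowerSeries.constantCoeff yS = 0 := by
  rw [← MvPowerSeries.coeff_zero_eq_constantCoeff_apply, yS]
  apply MvPowerSeries.coeff_monomial_ne
  intro h
  simpa using congrFun (congrArg (fun (e : Fin 2 →₀ ℕ) => (e : Fin 2 → ℕ)) h) 1

lemma X10 : Xab 1 0 = xS := by
  simp [Xab, zpowOf, xS]
lemma Y10 : Yab 1 0 = yS * (1 + xS) := by
  simp [Yab, zpowOf, w10, yS]
lemma X01 : Xab 0 1 = xS * MvPowerSeries.invOfUnit (1 + yS) 1 := by
  rw [Xab, w01, zpowOf, if_neg (by norm_num)]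
  norm_num
  exact Or.inl rfl
lemma Y01 : Yab 0 1 = yS := by
  simp [Yab, zpowOf, yS]
lemma X11 : Xab 1 1 = xS * MvPowerSeries.invOfUnit (1 + xS * yS) 1 := by
  rw [Xab, w11, zpowOf, if_neg (by norm_num)]
  norm_num
  exact Or.inl rfl
lemma Y11 : Yab 1 1 = yS * (1 + xS * yS) := by
  simp [Yab, zpowOf, w11, yS]

lemma cc_one_add {g : B₁} (h : MvPowerSeries.constantCoeff g = 0) :
    MvPowerSeries.constantCoeff (1 + g) = ((1 : ℚˣ) : ℚ) := by
  rw [map_add, map_one, h, add_zero, Units.val_one]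

lemma inv_rel {g : B₁} (h : MvPowerSeries.constantCoeff g = 0) :
    (1 + g) * MvPowerSeries.invOfUnit (1 + g) 1 = 1 :=
  MvPowerSeries.mul_invOfUnit _ _ (cc_one_add h)

lemma cc_inv {g : B₁} : MvPowerSeries.constantCoeff
    (MvPowerSeries.invOfUnit (1 + g) 1) = 1 := by
  rw [MvPowerSeries.constantCoeff_invOfUnit]
  norm_num

lemma inv_unique' {a b c : B₁} (h1 : a * b = 1) (h2 : a * c = 1) : b = c := by
  have : b * (a * c) = c * (a * b) := by ring
  rw [h1, h2, mul_one, mul_one] at this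
  exact this


lemma S_x (P Q : B₁) : S P Q xS = P := by
  rw [xS, S_monomial]
  simp [Finsupp.single_apply]

lemma S_y (P Q : B₁) : S P Q yS = Q := by
  rw [yS, S_monomial]
  simp [Finsupp.single_apply]

end Dev


/-- The pentagon identity `T_{1,0} ∘ T_{0,1} = T_{0,1} ∘ T_{1,1} ∘ T_{1,0}` for the
Kronecker quiver `K₁`. -/

theorem pentagon_identity (f : B₁) :
    Tab 1 0 (Tab 0 1 f) = Tab 0 1 (Tab 1 1 (Tab 1 0 f)) := by
  obtain ⟨uy, huy⟩ : ∃ u : B₁, MvPowerSeries.invOfUnit (1 + yS) 1 = u := ⟨_, rfl⟩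
  obtain ⟨uxy, huxy⟩ : ∃ u : B₁, MvPowerSeries.invOfUnit (1 + xS * yS) 1 = u := ⟨_, rfl⟩
  have ruy : (1 + yS) * uy = 1 := by rw [← huy]; exact inv_rel ccy
  have ruxy : (1 + xS * yS) * uxy = 1 := by
    rw [← huxy]; exact inv_rel (by rw [map_mul, ccx, zero_mul])
  have c10x : MvPowerSeries.constantCoeff (Xab 1 0) = 0 := by rw [X10]; exact ccx
  have c10y : MvPowerSeries.constantCoeff (Yab 1 0) = 0 := by
    rw [Y10, map_mul, ccy, zero_mul]
  have c01x : MvPowerSeries.constantCoeff (Xab 0 1) = 0 := by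
    rw [X01, map_mul, ccx, zero_mul]
  have c01y : MvPowerSeries.constantCoeff (Yab 0 1) = 0 := by rw [Y01]; exact ccy
  have c11x : MvPowerSeries.constantCoeff (Xab 1 1) = 0 := by
    rw [X11, map_mul, ccx, zero_mul]
  have c11y : MvPowerSeries.constantCoeff (Yab 1 1) = 0 := by
    rw [Y11, map_mul, ccy, zero_mul]
  have X01' : Xab 0 1 = xS * uy := by rw [X01, huy]
  have X11' : Xab 1 1 = xS * uxy := by rw [X11, huxy]
  obtain ⟨v, hvdef⟩ : ∃ v : B₁, S (Xab 1 0) (Yab 1 0) uy = v := ⟨_, rfl⟩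
  obtain ⟨z, hzdef⟩ : ∃ z : B₁, S (Xab 0 1) (Yab 0 1) uxy = z := ⟨_, rfl⟩
  have hv : (1 + yS * (1 + xS)) * v = 1 := by
    have h := congrArg (S (Xab 1 0) (Yab 1 0)) ruy
    rw [S_mul c10x c10y, S_add c10x c10y, S_one, S_y, hvdef, Y10] at h
    exact h
  have hz : (1 + xS * uy * yS) * z = 1 := by
    have h := congrArg (S (Xab 0 1) (Yab 0 1)) ruxy
    rw [S_mul c01x c01y, S_add c01x c01y, S_one, S_mul c01x c01y, S_x, S_y, hzdef] at h
    rw [X01', Y01] at h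
    exact h
  have E1 : S (Xab 1 0) (Yab 1 0) (Xab 0 1) = xS * v := by
    rw [X01, huy, S_mul c10x c10y, S_x, hvdef, X10]
  have E2 : S (Xab 0 1) (Yab 0 1) (Xab 1 1) = xS * uy * z := by
    rw [X11, huxy, S_mul c01x c01y, S_x, hzdef, X01']
  have E3 : S (Xab 0 1) (Yab 0 1) (Yab 1 1) = yS * (1 + xS * uy * yS) := by
    rw [Y11, S_mul c01x c01y, S_y, S_add c01x c01y, S_one, S_mul c01x c01y, S_x, S_y]
    rw [Y01, X01']
  have E4 : S (Xab 1 0) (Yab 1 0) (Yab 0 1) = yS * (1 + xS) := by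
    rw [Y01, S_y, Y10]
  have cA : MvPowerSeries.constantCoeff (S (Xab 0 1) (Yab 0 1) (Xab 1 1)) = 0 := by
    rw [constantCoeff_S c01x c01y, c11x]
  have cB : MvPowerSeries.constantCoeff (S (Xab 0 1) (Yab 0 1) (Yab 1 1)) = 0 := by
    rw [constantCoeff_S c01x c01y, c11y]
  have keyA : S (Xab 1 0) (Yab 1 0) (Xab 0 1) =
      S (S (Xab 0 1) (Yab 0 1) (Xab 1 1)) (S (Xab 0 1) (Yab 0 1) (Yab 1 1)) (Xab 1 0) := by
    have r2 : S (S (Xab 0 1) (Yab 0 1) (Xab 1 1)) (S (Xab 0 1) (Yab 0 1) (Yab 1 1)) (Xab 1 0) =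
        xS * uy * z := by
      conv_lhs => rw [X10]
      rw [S_x, E2]
    rw [E1, r2]
    have hvz : v = uy * z := by
      apply inv_unique' hv
      linear_combination z * ruy + hz
    rw [hvz]; ring
  have keyB : S (Xab 1 0) (Yab 1 0) (Yab 0 1) =
      S (S (Xab 0 1) (Yab 0 1) (Xab 1 1)) (S (Xab 0 1) (Yab 0 1) (Yab 1 1)) (Yab 1 0) := by
    have r2 : S (S (Xab 0 1) (Yab 0 1) (Xab 1 1)) (S (Xab 0 1) (Yab 0 1) (Yab 1 1)) (Yab 1 0) =
        (yS * (1 + xS * uy * yS)) * (1 + xS * uy * z) := by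
      conv_lhs => rw [Y10]
      rw [S_mul cA cB, S_y, S_add cA cB, S_one, S_x, E2, E3]
    rw [E4, r2]
    linear_combination (-(yS * xS * uy)) * hz - yS * xS * ruy
  show S (Xab 1 0) (Yab 1 0) (S (Xab 0 1) (Yab 0 1) f) =
      S (Xab 0 1) (Yab 0 1) (S (Xab 1 1) (Yab 1 1) (S (Xab 1 0) (Yab 1 0) f))
  rw [S_comp c01x c01y (Xab 1 0) (Yab 1 0) c10x c10y f,
    S_comp c11x c11y (Xab 0 1) (Yab 0 1) c01x c01y (S (Xab 1 0) (Yab 1 0) f),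
    S_comp c10x c10y _ _ cA cB f, keyA, keyB]

end
end
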